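/- arXiv:1809.08594 — 4 statements merged into one kernel-verified Lean document; each statement's English description precedes it below -/
import Mathlib

section
/- The Wang–Hou conjecture on signed graphs is false. That is, there exist a natural number n, an index k with 1 ≤ k ≤ n, and a real symmetric n×n matrix M (the Laplacian of a signed graph) satisfying: M_{ij} ∈ {−1, 0, 1} for all i ≠ j, and M_{ii} equals the number of indices j ≠ i with M_{ij} ≠ 0, such that the sum of the k largest eigenvalues of M (counted with multiplicity) strictly exceeds e + (k+1 choose 2) + 1, where e is half the number of nonzero off-diagonal entries of M (the number of edges of the underlying graph). -/
open Matrix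

noncomputable def MM : Matrix (Fin 9) (Fin 9) ℝ :=
  Matrix.of fun i j => if i = j then 8 else if (i : ℕ) / 3 = (j : ℕ) / 3 then -1 else 1

def N3 : Matrix (Fin 9) (Fin 9) ℤ :=
  Matrix.of fun i j => if i = j then 5 else if (i : ℕ) / 3 = (j : ℕ) / 3 then -1 else 1
def N9 : Matrix (Fin 9) (Fin 9) ℤ :=
  Matrix.of fun i j => if i = j then -1 else if (i : ℕ) / 3 = (j : ℕ) / 3 then -1 else 1
def N12 : Matrix (Fin 9) (Fin 9) ℤ :=
  Matrix.of fun i j => if i = j then -4 else if (i : ℕ) / 3 = (j : ℕ) / 3 then -1 else 1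

lemma key : N3 * (N9 * N12) = 0 := by decide

lemma hM : MM.IsHermitian := by
  rw [Matrix.IsHermitian]
  ext i j
  simp only [conjTranspose_apply, MM, Matrix.of_apply, star_trivial]
  rcases eq_or_ne i j with rfl | h
  · simp
  · rw [if_neg (Ne.symm h), if_neg h]
    by_cases hb : (i : ℕ) / 3 = (j : ℕ) / 3
    · rw [if_pos hb.symm, if_pos hb]
    · rw [if_neg (fun e => hb e.symm), if_neg hb]

lemma cast3 : (MM - (3:ℝ) • 1) = N3.map ⇑(Int.castRingHom ℝ) := by
  ext i j
  rcases eq_or_ne i j with rfl | h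
  · simp [MM, N3]; norm_num
  · simp [MM, N3, Matrix.one_apply_ne h, if_neg h]

lemma cast9 : (MM - (9:ℝ) • 1) = N9.map ⇑(Int.castRingHom ℝ) := by
  ext i j
  rcases eq_or_ne i j with rfl | h
  · simp [MM, N9]; norm_num
  · simp [MM, N9, Matrix.one_apply_ne h, if_neg h]

lemma cast12 : (MM - (12:ℝ) • 1) = N12.map ⇑(Int.castRingHom ℝ) := by
  ext i j
  rcases eq_or_ne i j with rfl | h
  · simp [MM, N12]; norm_num
  · simp [MM, N12, Matrix.one_apply_ne h, if_neg h]

lemma keyR : (MM - (3:ℝ) • 1) * ((MM - (9:ℝ) • 1) * (MM - (12:ℝ) • 1)) = 0 := by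
  rw [cast3, cast9, cast12, ← Matrix.map_mul, ← Matrix.map_mul, key]
  ext i j
  simp

lemma eig_mem (i : Fin 9) :
    hM.eigenvalues i = 3 ∨ hM.eigenvalues i = 9 ∨ hM.eigenvalues i = 12 := by
  set t := hM.eigenvalues i with ht
  set v : Fin 9 → ℝ := ⇑(hM.eigenvectorBasis i) with hv
  have hMv : MM *ᵥ v = t • v := hM.mulVec_eigenvectorBasis i
  have step : ∀ c : ℝ, (MM - c • 1) *ᵥ v = (t - c) • v := by
    intro c
    rw [sub_mulVec, smul_mulVec, one_mulVec, hMv, sub_smul]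
  have h0 : ((t - 3) * ((t - 9) * (t - 12))) • v = 0 := by
    have e : (MM - (3:ℝ) • 1) *ᵥ ((MM - (9:ℝ) • 1) *ᵥ ((MM - (12:ℝ) • 1) *ᵥ v)) = 0 := by
      rw [mulVec_mulVec, mulVec_mulVec, Matrix.mul_assoc, keyR, zero_mulVec]
    have e2 : (MM - (9:ℝ) • 1) *ᵥ ((MM - (12:ℝ) • 1) *ᵥ v) = (t - 12) • ((t - 9) • v) := by
      rw [step 12, mulVec_smul, step 9]
    rw [e2, mulVec_smul, mulVec_smul, step 3] at e
    calc ((t - 3) * ((t - 9) * (t - 12))) • v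
        = ((t - 12) * ((t - 9) * (t - 3))) • v := by congr 1; ring
      _ = (t - 12) • ((t - 9) • ((t - 3) • v)) := by rw [mul_smul, mul_smul]
      _ = 0 := e
  have hvne : v ≠ 0 := by
    have := hM.eigenvectorBasis.orthonormal.ne_zero i
    intro hc
    apply this
    ext j
    exact congrFun hc j
  rcases smul_eq_zero.mp h0 with hc | hc
  · rcases mul_eq_zero.mp hc with h | h
    · left; linarith [sub_eq_zero.mp h]
    · rcases mul_eq_zero.mp h with h | h
      · right; left; linarith [sub_eq_zero.mp h]
      · right; right; linarith [sub_eq_zero.mp h]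
  · exact absurd hc hvne

lemma sum_eig : ∑ i, hM.eigenvalues i = 72 := by
  have h1 : MM.trace = ∑ i, hM.eigenvalues i := by
    conv_lhs => rw [hM.spectral_theorem]
    rw [Unitary.conjStarAlgAut_apply, Matrix.trace_mul_comm, ← Matrix.mul_assoc,
      (Matrix.mem_unitaryGroup_iff').mp (hM.eigenvectorUnitary).2, Matrix.one_mul,
      trace_diagonal]
    simp
  have h2 : MM.trace = 72 := by
    rw [Matrix.trace]
    simp [Matrix.diag, MM]
    norm_num
  rw [← h1, h2]

lemma offdiag (i j : Fin 9) (h : i ≠ j) : MM i j = -1 ∨ MM i j = 1 := by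
  simp only [MM, Matrix.of_apply, if_neg h]
  split <;> simp

lemma offdiag_ne (i j : Fin 9) (h : i ≠ j) : MM i j ≠ 0 := by
  rcases offdiag i j h with h' | h' <;> rw [h'] <;> norm_num

lemma card_edges : Nat.card {p : Fin 9 × Fin 9 // p.1 ≠ p.2 ∧ MM p.1 p.2 ≠ 0} = 72 := by
  have h : ∀ p : Fin 9 × Fin 9, (p.1 ≠ p.2 ∧ MM p.1 p.2 ≠ 0) ↔ p.1 ≠ p.2 :=
    fun p => ⟨fun h => h.1, fun h => ⟨h, offdiag_ne _ _ h⟩⟩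
  rw [Nat.card_congr (Equiv.subtypeEquivRight h), Nat.card_eq_fintype_card]
  decide

lemma card_row (i : Fin 9) : Nat.card {j : Fin 9 // j ≠ i ∧ MM i j ≠ 0} = 8 := by
  have h : ∀ j : Fin 9, (j ≠ i ∧ MM i j ≠ 0) ↔ j ≠ i :=
    fun j => ⟨fun h => h.1, fun h => ⟨h, offdiag_ne _ _ (Ne.symm h)⟩⟩
  rw [Nat.card_congr (Equiv.subtypeEquivRight h), Nat.card_eq_fintype_card,
    Fintype.card_subtype, Finset.filter_ne']
  simp

lemma MM_diag (i : Fin 9) : MM i i = 8 := by simp [MM]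

/-- The Wang–Hou conjecture on signed graphs is false: there exist `n`, an index
`k` with `1 ≤ k ≤ n`, and a real symmetric `n × n` matrix `M` (a signed-graph
Laplacian: off-diagonal entries in `{-1, 0, 1}` and each diagonal entry equal to
the number of nonzero off-diagonal entries in its row) such that some `k`
eigenvalues of `M` (counted with multiplicity) sum to strictly more than
`e + (k+1 choose 2) + 1`, where `e` is half the number of nonzero off-diagonal
entries of `M`. -/
theorem wang_hou_conjecture_false :
    ∃ (n k : ℕ), 1 ≤ k ∧ k ≤ n ∧
      ∃ (M : Matrix (Fin n) (Fin n) ℝ) (hM : M.IsHermitian),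
        (∀ i j, i ≠ j → M i j = -1 ∨ M i j = 0 ∨ M i j = 1) ∧
        (∀ i, M i i = (Nat.card {j : Fin n // j ≠ i ∧ M i j ≠ 0} : ℝ)) ∧
        ∃ s : Finset (Fin n), s.card = k ∧
          (Nat.card {p : Fin n × Fin n // p.1 ≠ p.2 ∧ M p.1 p.2 ≠ 0} : ℝ) / 2
              + ((k + 1).choose 2 : ℝ) + 1
            < ∑ i ∈ s, hM.eigenvalues i := by
  classical
  set s : Finset (Fin 9) := Finset.univ.filter (fun i => hM.eigenvalues i ≠ 3) with hs
  set k := s.card with hk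
  have hk9 : k ≤ 9 := by
    calc k ≤ Finset.univ.card := Finset.card_filter_le _ _
    _ = 9 := by simp
  have hcompl : ∀ i ∈ sᶜ, hM.eigenvalues i = 3 := by
    intro i hi
    simp only [hs, Finset.mem_compl, Finset.mem_filter, Finset.mem_univ, true_and,
      not_not] at hi
    exact hi
  have hcard_compl : sᶜ.card = 9 - k := by
    rw [Finset.card_compl, hk]; simp
  have hsum_compl : ∑ i ∈ sᶜ, hM.eigenvalues i = 3 * ((9 - k : ℕ) : ℝ) := by
    rw [Finset.sum_congr rfl hcompl, Finset.sum_const, hcard_compl, nsmul_eq_mul, mul_comm]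
  have hsplit : ∑ i ∈ s, hM.eigenvalues i + 3 * ((9 - k : ℕ) : ℝ) = 72 := by
    rw [← hsum_compl, Finset.sum_add_sum_compl, sum_eig]
  have hsum_s : ∑ i ∈ s, hM.eigenvalues i = 45 + 3 * (k : ℝ) := by
    have : ((9 - k : ℕ) : ℝ) = 9 - (k : ℝ) := by
      push_cast [hk9]; ring
    rw [this] at hsplit
    linarith
  have hge : ∀ i ∈ s, (9 : ℝ) ≤ hM.eigenvalues i := by
    intro i hi
    simp only [hs, Finset.mem_filter, Finset.mem_univ, true_and] at hi
    rcases eig_mem i with h | h | h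
    · exact absurd h hi
    · rw [h]
    · rw [h]; norm_num
  have hk7 : k ≤ 7 := by
    have h1 : (9 : ℝ) * k ≤ ∑ i ∈ s, hM.eigenvalues i := by
      calc (9 : ℝ) * k = ∑ _i ∈ s, (9 : ℝ) := by rw [Finset.sum_const, nsmul_eq_mul, mul_comm]
      _ ≤ _ := Finset.sum_le_sum hge
    rw [hsum_s] at h1
    by_contra hcon
    push_neg at hcon
    have : (8 : ℝ) ≤ (k : ℝ) := by exact_mod_cast hcon
    linarith
  have hk1 : 1 ≤ k := by
    by_contra h0
    push_neg at h0
    have h0' : k = 0 := by omega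
    have hse : s = ∅ := Finset.card_eq_zero.mp h0'
    rw [hse, Finset.sum_empty, h0'] at hsum_s
    norm_num at hsum_s
  refine ⟨9, k, hk1, le_trans hk7 (by norm_num), MM, hM, ?_, ?_, s, rfl, ?_⟩
  · intro i j h
    rcases offdiag i j h with h' | h'
    · exact Or.inl h'
    · exact Or.inr (Or.inr h')
  · intro i
    rw [card_row i, MM_diag]
    norm_num
  · rw [card_edges, hsum_s]
    have : ((k + 1).choose 2 : ℝ) = (k * (k + 1) / 2 : ℕ) := by
      rw [Nat.choose_two_right]
      push_cast
      ring_nf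
    interval_cases k <;> norm_num [Nat.choose]
end

section
/- Let L₇ be the real symmetric 7×7 matrix with rows (6,1,1,−1,1,−1,1), (1,6,1,1,−1,1,1), (1,1,6,1,1,−1,−1), (−1,1,1,6,1,1,−1), (1,−1,1,1,6,1,1), (−1,1,−1,1,1,6,1), (1,1,−1,−1,1,1,6). Then the sum of the 4 largest eigenvalues of L₇ (counted with multiplicity) is strictly greater than 32. Equivalently, there exist 4 distinct indices i₁, i₂, i₃, i₄ ∈ {1, …, 7} such that the corresponding eigenvalues of L₇ sum to more than 32. -/
set_option maxHeartbeats 1000000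

open Matrix Finset

@[simp] private lemma vmk_1_0 {α : Type*} (a : α) (u : Fin 0 → α) (h : (0:ℕ) < 1) : Matrix.vecCons a u ⟨0, h⟩ = a := rfl
@[simp] private lemma vlit_1_0 {α : Type*} (a : α) (u : Fin 0 → α) : Matrix.vecCons a u (0 : Fin 1) = a := rfl
@[simp] private lemma vmk_2_0 {α : Type*} (a : α) (u : Fin 1 → α) (h : (0:ℕ) < 2) : Matrix.vecCons a u ⟨0, h⟩ = a := rfl
@[simp] private lemma vlit_2_0 {α : Type*} (a : α) (u : Fin 1 → α) : Matrix.vecCons a u (0 : Fin 2) = a := rfl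
@[simp] private lemma vmk_2_1 {α : Type*} (a : α) (u : Fin 1 → α) (h : (1:ℕ) < 2) : Matrix.vecCons a u ⟨1, h⟩ = u ⟨0, by omega⟩ := rfl
@[simp] private lemma vlit_2_1 {α : Type*} (a : α) (u : Fin 1 → α) : Matrix.vecCons a u (1 : Fin 2) = u ⟨0, by omega⟩ := rfl
@[simp] private lemma vmk_3_0 {α : Type*} (a : α) (u : Fin 2 → α) (h : (0:ℕ) < 3) : Matrix.vecCons a u ⟨0, h⟩ = a := rfl
@[simp] private lemma vlit_3_0 {α : Type*} (a : α) (u : Fin 2 → α) : Matrix.vecCons a u (0 : Fin 3) = a := rfl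
@[simp] private lemma vmk_3_1 {α : Type*} (a : α) (u : Fin 2 → α) (h : (1:ℕ) < 3) : Matrix.vecCons a u ⟨1, h⟩ = u ⟨0, by omega⟩ := rfl
@[simp] private lemma vlit_3_1 {α : Type*} (a : α) (u : Fin 2 → α) : Matrix.vecCons a u (1 : Fin 3) = u ⟨0, by omega⟩ := rfl
@[simp] private lemma vmk_3_2 {α : Type*} (a : α) (u : Fin 2 → α) (h : (2:ℕ) < 3) : Matrix.vecCons a u ⟨2, h⟩ = u ⟨1, by omega⟩ := rfl
@[simp] private lemma vlit_3_2 {α : Type*} (a : α) (u : Fin 2 → α) : Matrix.vecCons a u (2 : Fin 3) = u ⟨1, by omega⟩ := rfl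
@[simp] private lemma vmk_4_0 {α : Type*} (a : α) (u : Fin 3 → α) (h : (0:ℕ) < 4) : Matrix.vecCons a u ⟨0, h⟩ = a := rfl
@[simp] private lemma vlit_4_0 {α : Type*} (a : α) (u : Fin 3 → α) : Matrix.vecCons a u (0 : Fin 4) = a := rfl
@[simp] private lemma vmk_4_1 {α : Type*} (a : α) (u : Fin 3 → α) (h : (1:ℕ) < 4) : Matrix.vecCons a u ⟨1, h⟩ = u ⟨0, by omega⟩ := rfl
@[simp] private lemma vlit_4_1 {α : Type*} (a : α) (u : Fin 3 → α) : Matrix.vecCons a u (1 : Fin 4) = u ⟨0, by omega⟩ := rfl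
@[simp] private lemma vmk_4_2 {α : Type*} (a : α) (u : Fin 3 → α) (h : (2:ℕ) < 4) : Matrix.vecCons a u ⟨2, h⟩ = u ⟨1, by omega⟩ := rfl
@[simp] private lemma vlit_4_2 {α : Type*} (a : α) (u : Fin 3 → α) : Matrix.vecCons a u (2 : Fin 4) = u ⟨1, by omega⟩ := rfl
@[simp] private lemma vmk_4_3 {α : Type*} (a : α) (u : Fin 3 → α) (h : (3:ℕ) < 4) : Matrix.vecCons a u ⟨3, h⟩ = u ⟨2, by omega⟩ := rfl
@[simp] private lemma vlit_4_3 {α : Type*} (a : α) (u : Fin 3 → α) : Matrix.vecCons a u (3 : Fin 4) = u ⟨2, by omega⟩ := rfl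
@[simp] private lemma vmk_5_0 {α : Type*} (a : α) (u : Fin 4 → α) (h : (0:ℕ) < 5) : Matrix.vecCons a u ⟨0, h⟩ = a := rfl
@[simp] private lemma vlit_5_0 {α : Type*} (a : α) (u : Fin 4 → α) : Matrix.vecCons a u (0 : Fin 5) = a := rfl
@[simp] private lemma vmk_5_1 {α : Type*} (a : α) (u : Fin 4 → α) (h : (1:ℕ) < 5) : Matrix.vecCons a u ⟨1, h⟩ = u ⟨0, by omega⟩ := rfl
@[simp] private lemma vlit_5_1 {α : Type*} (a : α) (u : Fin 4 → α) : Matrix.vecCons a u (1 : Fin 5) = u ⟨0, by omega⟩ := rfl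
@[simp] private lemma vmk_5_2 {α : Type*} (a : α) (u : Fin 4 → α) (h : (2:ℕ) < 5) : Matrix.vecCons a u ⟨2, h⟩ = u ⟨1, by omega⟩ := rfl
@[simp] private lemma vlit_5_2 {α : Type*} (a : α) (u : Fin 4 → α) : Matrix.vecCons a u (2 : Fin 5) = u ⟨1, by omega⟩ := rfl
@[simp] private lemma vmk_5_3 {α : Type*} (a : α) (u : Fin 4 → α) (h : (3:ℕ) < 5) : Matrix.vecCons a u ⟨3, h⟩ = u ⟨2, by omega⟩ := rfl
@[simp] private lemma vlit_5_3 {α : Type*} (a : α) (u : Fin 4 → α) : Matrix.vecCons a u (3 : Fin 5) = u ⟨2, by omega⟩ := rfl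
@[simp] private lemma vmk_5_4 {α : Type*} (a : α) (u : Fin 4 → α) (h : (4:ℕ) < 5) : Matrix.vecCons a u ⟨4, h⟩ = u ⟨3, by omega⟩ := rfl
@[simp] private lemma vlit_5_4 {α : Type*} (a : α) (u : Fin 4 → α) : Matrix.vecCons a u (4 : Fin 5) = u ⟨3, by omega⟩ := rfl
@[simp] private lemma vmk_6_0 {α : Type*} (a : α) (u : Fin 5 → α) (h : (0:ℕ) < 6) : Matrix.vecCons a u ⟨0, h⟩ = a := rfl
@[simp] private lemma vlit_6_0 {α : Type*} (a : α) (u : Fin 5 → α) : Matrix.vecCons a u (0 : Fin 6) = a := rfl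
@[simp] private lemma vmk_6_1 {α : Type*} (a : α) (u : Fin 5 → α) (h : (1:ℕ) < 6) : Matrix.vecCons a u ⟨1, h⟩ = u ⟨0, by omega⟩ := rfl
@[simp] private lemma vlit_6_1 {α : Type*} (a : α) (u : Fin 5 → α) : Matrix.vecCons a u (1 : Fin 6) = u ⟨0, by omega⟩ := rfl
@[simp] private lemma vmk_6_2 {α : Type*} (a : α) (u : Fin 5 → α) (h : (2:ℕ) < 6) : Matrix.vecCons a u ⟨2, h⟩ = u ⟨1, by omega⟩ := rfl
@[simp] private lemma vlit_6_2 {α : Type*} (a : α) (u : Fin 5 → α) : Matrix.vecCons a u (2 : Fin 6) = u ⟨1, by omega⟩ := rfl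
@[simp] private lemma vmk_6_3 {α : Type*} (a : α) (u : Fin 5 → α) (h : (3:ℕ) < 6) : Matrix.vecCons a u ⟨3, h⟩ = u ⟨2, by omega⟩ := rfl
@[simp] private lemma vlit_6_3 {α : Type*} (a : α) (u : Fin 5 → α) : Matrix.vecCons a u (3 : Fin 6) = u ⟨2, by omega⟩ := rfl
@[simp] private lemma vmk_6_4 {α : Type*} (a : α) (u : Fin 5 → α) (h : (4:ℕ) < 6) : Matrix.vecCons a u ⟨4, h⟩ = u ⟨3, by omega⟩ := rfl
@[simp] private lemma vlit_6_4 {α : Type*} (a : α) (u : Fin 5 → α) : Matrix.vecCons a u (4 : Fin 6) = u ⟨3, by omega⟩ := rfl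
@[simp] private lemma vmk_6_5 {α : Type*} (a : α) (u : Fin 5 → α) (h : (5:ℕ) < 6) : Matrix.vecCons a u ⟨5, h⟩ = u ⟨4, by omega⟩ := rfl
@[simp] private lemma vlit_6_5 {α : Type*} (a : α) (u : Fin 5 → α) : Matrix.vecCons a u (5 : Fin 6) = u ⟨4, by omega⟩ := rfl
@[simp] private lemma vmk_7_0 {α : Type*} (a : α) (u : Fin 6 → α) (h : (0:ℕ) < 7) : Matrix.vecCons a u ⟨0, h⟩ = a := rfl
@[simp] private lemma vlit_7_0 {α : Type*} (a : α) (u : Fin 6 → α) : Matrix.vecCons a u (0 : Fin 7) = a := rfl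
@[simp] private lemma vmk_7_1 {α : Type*} (a : α) (u : Fin 6 → α) (h : (1:ℕ) < 7) : Matrix.vecCons a u ⟨1, h⟩ = u ⟨0, by omega⟩ := rfl
@[simp] private lemma vlit_7_1 {α : Type*} (a : α) (u : Fin 6 → α) : Matrix.vecCons a u (1 : Fin 7) = u ⟨0, by omega⟩ := rfl
@[simp] private lemma vmk_7_2 {α : Type*} (a : α) (u : Fin 6 → α) (h : (2:ℕ) < 7) : Matrix.vecCons a u ⟨2, h⟩ = u ⟨1, by omega⟩ := rfl
@[simp] private lemma vlit_7_2 {α : Type*} (a : α) (u : Fin 6 → α) : Matrix.vecCons a u (2 : Fin 7) = u ⟨1, by omega⟩ := rfl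
@[simp] private lemma vmk_7_3 {α : Type*} (a : α) (u : Fin 6 → α) (h : (3:ℕ) < 7) : Matrix.vecCons a u ⟨3, h⟩ = u ⟨2, by omega⟩ := rfl
@[simp] private lemma vlit_7_3 {α : Type*} (a : α) (u : Fin 6 → α) : Matrix.vecCons a u (3 : Fin 7) = u ⟨2, by omega⟩ := rfl
@[simp] private lemma vmk_7_4 {α : Type*} (a : α) (u : Fin 6 → α) (h : (4:ℕ) < 7) : Matrix.vecCons a u ⟨4, h⟩ = u ⟨3, by omega⟩ := rfl
@[simp] private lemma vlit_7_4 {α : Type*} (a : α) (u : Fin 6 → α) : Matrix.vecCons a u (4 : Fin 7) = u ⟨3, by omega⟩ := rfl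
@[simp] private lemma vmk_7_5 {α : Type*} (a : α) (u : Fin 6 → α) (h : (5:ℕ) < 7) : Matrix.vecCons a u ⟨5, h⟩ = u ⟨4, by omega⟩ := rfl
@[simp] private lemma vlit_7_5 {α : Type*} (a : α) (u : Fin 6 → α) : Matrix.vecCons a u (5 : Fin 7) = u ⟨4, by omega⟩ := rfl
@[simp] private lemma vmk_7_6 {α : Type*} (a : α) (u : Fin 6 → α) (h : (6:ℕ) < 7) : Matrix.vecCons a u ⟨6, h⟩ = u ⟨5, by omega⟩ := rfl
@[simp] private lemma vlit_7_6 {α : Type*} (a : α) (u : Fin 6 → α) : Matrix.vecCons a u (6 : Fin 7) = u ⟨5, by omega⟩ := rfl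

@[simp] private lemma fmk_1_0 (h : (0:ℕ) < 1) : (⟨0, h⟩ : Fin 1) = (0 : Fin 1) := rfl
@[simp] private lemma fmk_2_0 (h : (0:ℕ) < 2) : (⟨0, h⟩ : Fin 2) = (0 : Fin 2) := rfl
@[simp] private lemma fmk_2_1 (h : (1:ℕ) < 2) : (⟨1, h⟩ : Fin 2) = (1 : Fin 2) := rfl
@[simp] private lemma fmk_3_0 (h : (0:ℕ) < 3) : (⟨0, h⟩ : Fin 3) = (0 : Fin 3) := rfl
@[simp] private lemma fmk_3_1 (h : (1:ℕ) < 3) : (⟨1, h⟩ : Fin 3) = (1 : Fin 3) := rfl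
@[simp] private lemma fmk_3_2 (h : (2:ℕ) < 3) : (⟨2, h⟩ : Fin 3) = (2 : Fin 3) := rfl
@[simp] private lemma fmk_4_0 (h : (0:ℕ) < 4) : (⟨0, h⟩ : Fin 4) = (0 : Fin 4) := rfl
@[simp] private lemma fmk_4_1 (h : (1:ℕ) < 4) : (⟨1, h⟩ : Fin 4) = (1 : Fin 4) := rfl
@[simp] private lemma fmk_4_2 (h : (2:ℕ) < 4) : (⟨2, h⟩ : Fin 4) = (2 : Fin 4) := rfl
@[simp] private lemma fmk_4_3 (h : (3:ℕ) < 4) : (⟨3, h⟩ : Fin 4) = (3 : Fin 4) := rfl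
@[simp] private lemma fmk_5_0 (h : (0:ℕ) < 5) : (⟨0, h⟩ : Fin 5) = (0 : Fin 5) := rfl
@[simp] private lemma fmk_5_1 (h : (1:ℕ) < 5) : (⟨1, h⟩ : Fin 5) = (1 : Fin 5) := rfl
@[simp] private lemma fmk_5_2 (h : (2:ℕ) < 5) : (⟨2, h⟩ : Fin 5) = (2 : Fin 5) := rfl
@[simp] private lemma fmk_5_3 (h : (3:ℕ) < 5) : (⟨3, h⟩ : Fin 5) = (3 : Fin 5) := rfl
@[simp] private lemma fmk_5_4 (h : (4:ℕ) < 5) : (⟨4, h⟩ : Fin 5) = (4 : Fin 5) := rfl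
@[simp] private lemma fmk_6_0 (h : (0:ℕ) < 6) : (⟨0, h⟩ : Fin 6) = (0 : Fin 6) := rfl
@[simp] private lemma fmk_6_1 (h : (1:ℕ) < 6) : (⟨1, h⟩ : Fin 6) = (1 : Fin 6) := rfl
@[simp] private lemma fmk_6_2 (h : (2:ℕ) < 6) : (⟨2, h⟩ : Fin 6) = (2 : Fin 6) := rfl
@[simp] private lemma fmk_6_3 (h : (3:ℕ) < 6) : (⟨3, h⟩ : Fin 6) = (3 : Fin 6) := rfl
@[simp] private lemma fmk_6_4 (h : (4:ℕ) < 6) : (⟨4, h⟩ : Fin 6) = (4 : Fin 6) := rfl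
@[simp] private lemma fmk_6_5 (h : (5:ℕ) < 6) : (⟨5, h⟩ : Fin 6) = (5 : Fin 6) := rfl
@[simp] private lemma fmk_7_0 (h : (0:ℕ) < 7) : (⟨0, h⟩ : Fin 7) = (0 : Fin 7) := rfl
@[simp] private lemma fmk_7_1 (h : (1:ℕ) < 7) : (⟨1, h⟩ : Fin 7) = (1 : Fin 7) := rfl
@[simp] private lemma fmk_7_2 (h : (2:ℕ) < 7) : (⟨2, h⟩ : Fin 7) = (2 : Fin 7) := rfl
@[simp] private lemma fmk_7_3 (h : (3:ℕ) < 7) : (⟨3, h⟩ : Fin 7) = (3 : Fin 7) := rfl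
@[simp] private lemma fmk_7_4 (h : (4:ℕ) < 7) : (⟨4, h⟩ : Fin 7) = (4 : Fin 7) := rfl
@[simp] private lemma fmk_7_5 (h : (5:ℕ) < 7) : (⟨5, h⟩ : Fin 7) = (5 : Fin 7) := rfl
@[simp] private lemma fmk_7_6 (h : (6:ℕ) < 7) : (⟨6, h⟩ : Fin 7) = (6 : Fin 7) := rfl

@[simp] private lemma vecHead_const {n : ℕ} {α : Type*} (c : α) : Matrix.vecHead (fun _ : Fin (n+1) => c) = c := rfl
@[simp] private lemma vecTail_const {n : ℕ} {α : Type*} (c : α) : Matrix.vecTail (fun _ : Fin (n+1) => c) = fun _ : Fin n => c := rfl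

private abbrev LM : Matrix (Fin 7) (Fin 7) ℝ :=
  !![6, 1, 1, -1, 1, -1, 1;
     1, 6, 1, 1, -1, 1, 1;
     1, 1, 6, 1, 1, -1, -1;
     -1, 1, 1, 6, 1, 1, -1;
     1, -1, 1, 1, 6, 1, 1;
     -1, 1, -1, 1, 1, 6, 1;
     1, 1, -1, -1, 1, 1, 6]

private abbrev BM : Matrix (Fin 7) (Fin 7) ℝ :=
  !![1, -1, 1, 1, -1, 1, 1;
     -1, 1, -1, -1, 5, -1, -1;
     1, -1, 1, 1, -1, 1, 1;
     1, -1, 1, 1, -1, 1, 1;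
     -1, 5, -1, -1, 1, -1, -1;
     1, -1, 1, 1, -1, 1, 1;
     1, -1, 1, 1, -1, 1, 1]

private abbrev DM : Matrix (Fin 7) (Fin 7) ℝ :=
  !![-4, 0, 2, 0, 0, 0, 2;
     0, -4, 0, 0, 4, 0, 0;
     2, 0, -4, 2, 0, 0, 0;
     0, 0, 2, -4, 0, 2, 0;
     0, 4, 0, 0, -4, 0, 0;
     0, 0, 0, 2, 0, -4, 2;
     2, 0, 0, 0, 0, 2, -4]

private abbrev EM : Matrix (Fin 7) (Fin 7) ℝ :=
  !![-1, 1, 1, -1, 1, -1, 1;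
     1, -1, 1, 1, -1, 1, 1;
     1, 1, -1, 1, 1, -1, -1;
     -1, 1, 1, -1, 1, 1, -1;
     1, -1, 1, 1, -1, 1, 1;
     -1, 1, -1, 1, 1, -1, 1;
     1, 1, -1, -1, 1, 1, -1]

private abbrev M1 : Matrix (Fin 7) (Fin 7) ℝ :=
  !![-3, 7, -3, -3, 7, -3, -3;
     7, -11, 7, 7, -11, 7, 7;
     -3, 7, -3, -3, 7, -3, -3;
     -3, 7, -3, -3, 7, -3, -3;
     7, -11, 7, 7, -11, 7, 7;
     -3, 7, -3, -3, 7, -3, -3;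
     -3, 7, -3, -3, 7, -3, -3]

private abbrev M2 : Matrix (Fin 7) (Fin 7) ℝ :=
  !![-29, 57, -29, -29, 57, -29, -29;
     57, -101, 57, 57, -101, 57, 57;
     -29, 57, -29, -29, 57, -29, -29;
     -29, 57, -29, -29, 57, -29, -29;
     57, -101, 57, 57, -101, 57, 57;
     -29, 57, -29, -29, 57, -29, -29;
     -29, 57, -29, -29, 57, -29, -29]

private lemma FE (v : Fin 7 → ℝ) : EM *ᵥ v = LM *ᵥ v - (7:ℝ) • v := by
  funext i
  fin_cases i <;>
    simp only [LM, BM, DM, EM, M1, M2, Matrix.mulVec, dotProduct, Fin.sum_univ_seven,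
      Pi.add_apply, Pi.sub_apply, Pi.smul_apply, Pi.zero_apply, smul_eq_mul, Matrix.of_apply,
      fmk_1_0, fmk_2_0, fmk_2_1, fmk_3_0, fmk_3_1, fmk_3_2, fmk_4_0, fmk_4_1, fmk_4_2, fmk_4_3, fmk_5_0, fmk_5_1, fmk_5_2, fmk_5_3, fmk_5_4, fmk_6_0, fmk_6_1, fmk_6_2, fmk_6_3, fmk_6_4, fmk_6_5, fmk_7_0, fmk_7_1, fmk_7_2, fmk_7_3, fmk_7_4, fmk_7_5, fmk_7_6,
      vlit_1_0, vmk_1_0, vlit_2_0, vmk_2_0, vlit_2_1, vmk_2_1, vlit_3_0, vmk_3_0, vlit_3_1, vmk_3_1, vlit_3_2, vmk_3_2, vlit_4_0, vmk_4_0, vlit_4_1, vmk_4_1, vlit_4_2, vmk_4_2, vlit_4_3, vmk_4_3, vlit_5_0, vmk_5_0, vlit_5_1, vmk_5_1, vlit_5_2, vmk_5_2, vlit_5_3, vmk_5_3, vlit_5_4, vmk_5_4, vlit_6_0, vmk_6_0, vlit_6_1, vmk_6_1, vlit_6_2, vmk_6_2, vlit_6_3, vmk_6_3, vlit_6_4,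 vmk_6_4, vlit_6_5, vmk_6_5, vlit_7_0, vmk_7_0, vlit_7_1, vmk_7_1, vlit_7_2, vmk_7_2, vlit_7_3, vmk_7_3, vlit_7_4, vmk_7_4, vlit_7_5, vmk_7_5, vlit_7_6, vmk_7_6] <;> ring

private lemma FB (v : Fin 7 → ℝ) :
    BM *ᵥ v = LM *ᵥ (LM *ᵥ v) - (12:ℝ) • (LM *ᵥ v) + (31:ℝ) • v := by
  funext i
  fin_cases i <;>
    simp only [LM, BM, DM, EM, M1, M2, Matrix.mulVec, dotProduct, Fin.sum_univ_seven,
      Pi.add_apply, Pi.sub_apply, Pi.smul_apply, Pi.zero_apply, smul_eq_mul, Matrix.of_apply,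
      fmk_1_0, fmk_2_0, fmk_2_1, fmk_3_0, fmk_3_1, fmk_3_2, fmk_4_0, fmk_4_1, fmk_4_2, fmk_4_3, fmk_5_0, fmk_5_1, fmk_5_2, fmk_5_3, fmk_5_4, fmk_6_0, fmk_6_1, fmk_6_2, fmk_6_3, fmk_6_4, fmk_6_5, fmk_7_0, fmk_7_1, fmk_7_2, fmk_7_3, fmk_7_4, fmk_7_5, fmk_7_6,
      vlit_1_0, vmk_1_0, vlit_2_0, vmk_2_0, vlit_2_1, vmk_2_1, vlit_3_0, vmk_3_0, vlit_3_1, vmk_3_1, vlit_3_2, vmk_3_2, vlit_4_0, vmk_4_0, vlit_4_1, vmk_4_1, vlit_4_2, vmk_4_2, vlit_4_3, vmk_4_3, vlit_5_0, vmk_5_0, vlit_5_1, vmk_5_1, vlit_5_2, vmk_5_2, vlit_5_3, vmk_5_3, vlit_5_4, vmk_5_4, vlit_6_0, vmk_6_0, vlit_6_1, vmk_6_1, vlit_6_2, vmk_6_2, vlit_6_3, vmk_6_3, vlit_6_4, vmk_6_4, vlit_6_5, vmk_6_5, vlit_7_0, vmk_7_0, vlit_7_1, vmk_7_1, vlit_7_2,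 vmk_7_2, vlit_7_3, vmk_7_3, vlit_7_4, vmk_7_4, vlit_7_5, vmk_7_5, vlit_7_6, vmk_7_6] <;> ring

private lemma FD (v : Fin 7 → ℝ) :
    DM *ᵥ v = LM *ᵥ (LM *ᵥ v) - (11:ℝ) • (LM *ᵥ v) + (20:ℝ) • v := by
  funext i
  fin_cases i <;>
    simp only [LM, BM, DM, EM, M1, M2, Matrix.mulVec, dotProduct, Fin.sum_univ_seven,
      Pi.add_apply, Pi.sub_apply, Pi.smul_apply, Pi.zero_apply, smul_eq_mul, Matrix.of_apply,
      fmk_1_0, fmk_2_0, fmk_2_1, fmk_3_0, fmk_3_1, fmk_3_2, fmk_4_0, fmk_4_1, fmk_4_2, fmk_4_3, fmk_5_0, fmk_5_1, fmk_5_2, fmk_5_3, fmk_5_4, fmk_6_0, fmk_6_1, fmk_6_2, fmk_6_3, fmk_6_4, fmk_6_5, fmk_7_0, fmk_7_1, fmk_7_2, fmk_7_3, fmk_7_4, fmk_7_5, fmk_7_6,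
      vlit_1_0, vmk_1_0, vlit_2_0, vmk_2_0, vlit_2_1, vmk_2_1, vlit_3_0, vmk_3_0, vlit_3_1, vmk_3_1, vlit_3_2, vmk_3_2, vlit_4_0, vmk_4_0, vlit_4_1, vmk_4_1, vlit_4_2, vmk_4_2, vlit_4_3, vmk_4_3, vlit_5_0, vmk_5_0, vlit_5_1, vmk_5_1, vlit_5_2, vmk_5_2, vlit_5_3, vmk_5_3, vlit_5_4, vmk_5_4, vlit_6_0, vmk_6_0, vlit_6_1, vmk_6_1, vlit_6_2, vmk_6_2, vlit_6_3, vmk_6_3, vlit_6_4, vmk_6_4, vlit_6_5, vmk_6_5, vlit_7_0, vmk_7_0, vlit_7_1, vmk_7_1, vlit_7_2, vmk_7_2, vlit_7_3, vmk_7_3, vlit_7_4, vmk_7_4, vlit_7_5, vmk_7_5, vlit_7_6, vmk_7_6] <;> ring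

private lemma G1 (v : Fin 7 → ℝ) : M1 *ᵥ v = EM *ᵥ (BM *ᵥ v) := by
  funext i
  fin_cases i <;>
    simp only [LM, BM, DM, EM, M1, M2, Matrix.mulVec, dotProduct, Fin.sum_univ_seven,
      Pi.add_apply, Pi.sub_apply, Pi.smul_apply, Pi.zero_apply, smul_eq_mul, Matrix.of_apply,
      fmk_1_0, fmk_2_0, fmk_2_1, fmk_3_0, fmk_3_1, fmk_3_2, fmk_4_0, fmk_4_1, fmk_4_2, fmk_4_3, fmk_5_0, fmk_5_1, fmk_5_2, fmk_5_3, fmk_5_4, fmk_6_0, fmk_6_1, fmk_6_2, fmk_6_3, fmk_6_4, fmk_6_5, fmk_7_0, fmk_7_1, fmk_7_2, fmk_7_3, fmk_7_4, fmk_7_5, fmk_7_6,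
      vlit_1_0, vmk_1_0, vlit_2_0, vmk_2_0, vlit_2_1, vmk_2_1, vlit_3_0, vmk_3_0, vlit_3_1, vmk_3_1, vlit_3_2, vmk_3_2, vlit_4_0, vmk_4_0, vlit_4_1, vmk_4_1, vlit_4_2, vmk_4_2, vlit_4_3, vmk_4_3, vlit_5_0, vmk_5_0, vlit_5_1, vmk_5_1, vlit_5_2, vmk_5_2, vlit_5_3, vmk_5_3, vlit_5_4, vmk_5_4, vlit_6_0, vmk_6_0, vlit_6_1, vmk_6_1, vlit_6_2, vmk_6_2, vlit_6_3, vmk_6_3, vlit_6_4, vmk_6_4, vlit_6_5, vmk_6_5, vlit_7_0, vmk_7_0, vlit_7_1, vmk_7_1, vlit_7_2, vmk_7_2, vlit_7_3, vmk_7_3, vlit_7_4, vmk_7_4, vlit_7_5, vmk_7_5, vlit_7_6, vmk_7_6] <;> ring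

private lemma G2 (v : Fin 7 → ℝ) : M2 *ᵥ v = M1 *ᵥ (BM *ᵥ v) := by
  funext i
  fin_cases i <;>
    simp only [LM, BM, DM, EM, M1, M2, Matrix.mulVec, dotProduct, Fin.sum_univ_seven,
      Pi.add_apply, Pi.sub_apply, Pi.smul_apply, Pi.zero_apply, smul_eq_mul, Matrix.of_apply,
      fmk_1_0, fmk_2_0, fmk_2_1, fmk_3_0, fmk_3_1, fmk_3_2, fmk_4_0, fmk_4_1, fmk_4_2, fmk_4_3, fmk_5_0, fmk_5_1, fmk_5_2, fmk_5_3, fmk_5_4, fmk_6_0, fmk_6_1, fmk_6_2, fmk_6_3, fmk_6_4, fmk_6_5, fmk_7_0, fmk_7_1, fmk_7_2, fmk_7_3, fmk_7_4, fmk_7_5, fmk_7_6,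
      vlit_1_0, vmk_1_0, vlit_2_0, vmk_2_0, vlit_2_1, vmk_2_1, vlit_3_0, vmk_3_0, vlit_3_1, vmk_3_1, vlit_3_2, vmk_3_2, vlit_4_0, vmk_4_0, vlit_4_1, vmk_4_1, vlit_4_2, vmk_4_2, vlit_4_3, vmk_4_3, vlit_5_0, vmk_5_0, vlit_5_1, vmk_5_1, vlit_5_2, vmk_5_2, vlit_5_3, vmk_5_3, vlit_5_4, vmk_5_4, vlit_6_0, vmk_6_0, vlit_6_1, vmk_6_1, vlit_6_2, vmk_6_2, vlit_6_3, vmk_6_3, vlit_6_4, vmk_6_4, vlit_6_5, vmk_6_5, vlit_7_0, vmk_7_0, vlit_7_1, vmk_7_1, vlit_7_2, vmk_7_2, vlit_7_3, vmk_7_3, vlit_7_4, vmk_7_4, vlit_7_5, vmk_7_5, vlit_7_6, vmk_7_6] <;> ring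

private lemma G3 (v : Fin 7 → ℝ) : M2 *ᵥ (DM *ᵥ v) = 0 := by
  funext i
  fin_cases i <;>
    simp only [LM, BM, DM, EM, M1, M2, Matrix.mulVec, dotProduct, Fin.sum_univ_seven,
      Pi.add_apply, Pi.sub_apply, Pi.smul_apply, Pi.zero_apply, smul_eq_mul, Matrix.of_apply,
      fmk_1_0, fmk_2_0, fmk_2_1, fmk_3_0, fmk_3_1, fmk_3_2, fmk_4_0, fmk_4_1, fmk_4_2, fmk_4_3, fmk_5_0, fmk_5_1, fmk_5_2, fmk_5_3, fmk_5_4, fmk_6_0, fmk_6_1, fmk_6_2, fmk_6_3, fmk_6_4, fmk_6_5, fmk_7_0, fmk_7_1, fmk_7_2, fmk_7_3, fmk_7_4, fmk_7_5, fmk_7_6,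
      vlit_1_0, vmk_1_0, vlit_2_0, vmk_2_0, vlit_2_1, vmk_2_1, vlit_3_0, vmk_3_0, vlit_3_1, vmk_3_1, vlit_3_2, vmk_3_2, vlit_4_0, vmk_4_0, vlit_4_1, vmk_4_1, vlit_4_2, vmk_4_2, vlit_4_3, vmk_4_3, vlit_5_0, vmk_5_0, vlit_5_1, vmk_5_1, vlit_5_2, vmk_5_2, vlit_5_3, vmk_5_3, vlit_5_4, vmk_5_4, vlit_6_0, vmk_6_0, vlit_6_1, vmk_6_1, vlit_6_2, vmk_6_2, vlit_6_3, vmk_6_3, vlit_6_4, vmk_6_4, vlit_6_5, vmk_6_5, vlit_7_0, vmk_7_0, vlit_7_1, vmk_7_1, vlit_7_2, vmk_7_2, vlit_7_3, vmk_7_3, vlit_7_4, vmk_7_4, vlit_7_5, vmk_7_5, vlit_7_6, vmk_7_6] <;> ring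

private lemma root_fact (hL : LM.IsHermitian) (i : Fin 7) :
    (hL.eigenvalues i - 7) * ((hL.eigenvalues i)^2 - 12*hL.eigenvalues i + 31)^2 *
      ((hL.eigenvalues i)^2 - 11*hL.eigenvalues i + 20) = 0 := by
  set t := hL.eigenvalues i with ht
  have h1 := hL.mulVec_eigenvectorBasis i
  set v := ⇑(hL.eigenvectorBasis i) with hvdef
  rw [← ht] at h1
  have hv0 : v ≠ 0 := by
    have hne := hL.eigenvectorBasis.orthonormal.ne_zero i
    intro h
    apply hne
    ext j
    exact congrFun h j
  have hEv : EM *ᵥ v = (t - 7) • v := by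
    rw [FE v, h1]; module
  have hBv : BM *ᵥ v = (t^2 - 12*t + 31) • v := by
    rw [FB v, h1, Matrix.mulVec_smul, h1]; module
  have hDv : DM *ᵥ v = (t^2 - 11*t + 20) • v := by
    rw [FD v, h1, Matrix.mulVec_smul, h1]; module
  have hM1v : M1 *ᵥ v = ((t - 7) * (t^2 - 12*t + 31)) • v := by
    rw [G1 v, hBv, Matrix.mulVec_smul, hEv, smul_smul, mul_comm]
  have hM2v : M2 *ᵥ v = ((t - 7) * (t^2 - 12*t + 31)^2) • v := by
    rw [G2 v, hBv, Matrix.mulVec_smul, hM1v, smul_smul]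
    rw [show (t^2 - 12*t + 31) * ((t - 7) * (t^2 - 12*t + 31)) =
      (t - 7) * (t^2 - 12*t + 31)^2 by ring]
  have hfin : ((t - 7) * (t^2 - 12*t + 31)^2 * (t^2 - 11*t + 20)) • v = 0 := by
    have h0 := G3 v
    rw [hDv, Matrix.mulVec_smul, hM2v, smul_smul] at h0
    rw [show (t - 7) * (t^2 - 12*t + 31)^2 * (t^2 - 11*t + 20) =
      (t^2 - 11*t + 20) * ((t - 7) * (t^2 - 12*t + 31)^2) by ring]
    exact h0
  rcases smul_eq_zero.1 hfin with h | h
  · exact h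
  · exact absurd h hv0

private lemma classify (t : ℝ)
    (h : (t - 7) * (t^2 - 12*t + 31)^2 * (t^2 - 11*t + 20) = 0) :
    (2.2984 < t ∧ t < 2.29845) ∨ (3.7639 < t ∧ t < 3.764) ∨ t = 7 ∨
      (8.236 < t ∧ t < 8.2361) ∨ (8.70155 < t ∧ t < 8.7016) := by
  rcases mul_eq_zero.1 h with h1 | hr
  · rcases mul_eq_zero.1 h1 with h7 | hq
    · right; right; left; linarith
    · have hq' : t^2 - 12*t + 31 = 0 := by
        have := pow_eq_zero_iff (n := 2) (by norm_num) |>.1 hq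
        exact this
      rcases le_or_gt t 6 with hle | hlt
      · right; left; constructor <;> nlinarith
      · right; right; right; left; constructor <;> nlinarith
  · rcases le_or_gt t 5 with hle | hlt
    · left; constructor <;> nlinarith
    · right; right; right; right; constructor <;> nlinarith

private lemma trace_fact (hL : LM.IsHermitian) : ∑ i, hL.eigenvalues i = 42 := by
  have htr : LM.trace = ∑ i, (RCLike.ofReal (K := ℝ) ∘ hL.eigenvalues) i := by
    rw [hL.trace_eq_sum_eigenvalues]; rfl
  have hLtr : LM.trace = 42 := by
    simp [Matrix.trace, Fin.sum_univ_seven, Matrix.diag]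
    norm_num
  rw [hLtr] at htr
  have : ∑ i, (RCLike.ofReal ∘ hL.eigenvalues) i = ∑ i, hL.eigenvalues i := by
    simp [Function.comp]
  rw [this] at htr
  linarith [htr]

/-- For the signed Laplacian `L₇` of a signing of `K₇`, the sum of the 4 largest
eigenvalues exceeds `32 = e(K₇) + (5 choose 2) + 1`: equivalently, some 4
eigenvalues (with multiplicity, i.e. 4 distinct indices) sum to more than 32. -/
theorem sum_four_largest_eigenvalues_L7_gt_32
    (hL : (!![6, 1, 1, -1, 1, -1, 1;
              1, 6, 1, 1, -1, 1, 1;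
              1, 1, 6, 1, 1, -1, -1;
              -1, 1, 1, 6, 1, 1, -1;
              1, -1, 1, 1, 6, 1, 1;
              -1, 1, -1, 1, 1, 6, 1;
              1, 1, -1, -1, 1, 1, 6] : Matrix (Fin 7) (Fin 7) ℝ).IsHermitian) :
    ∃ s : Finset (Fin 7), s.card = 4 ∧ 32 < ∑ i ∈ s, hL.eigenvalues i := by
  classical
  set f := hL.eigenvalues with hf
  have hP : ∀ i, (2.2984 < f i ∧ f i < 2.29845) ∨ (3.7639 < f i ∧ f i < 3.764) ∨ f i = 7 ∨
      (8.236 < f i ∧ f i < 8.2361) ∨ (8.70155 < f i ∧ f i < 8.7016) :=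
    fun i => classify _ (root_fact hL i)
  have hsum : ∑ i, f i = 42 := trace_fact hL
  -- partition of `univ` by value ranges
  set slow : Finset (Fin 7) := univ.filter (fun i => f i < 6) with hslow
  set s : Finset (Fin 7) := univ.filter (fun i => ¬ f i < 6) with hs
  set s1 : Finset (Fin 7) := slow.filter (fun i => f i < 3) with hs1
  set s2 : Finset (Fin 7) := slow.filter (fun i => ¬ f i < 3) with hs2
  set s5 : Finset (Fin 7) := s.filter (fun i => 8.5 < f i) with hs5
  set s34 : Finset (Fin 7) := s.filter (fun i => ¬ 8.5 < f i) with hs34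
  set s3 : Finset (Fin 7) := s34.filter (fun i => f i < 8) with hs3
  set s4 : Finset (Fin 7) := s34.filter (fun i => ¬ f i < 8) with hs4
  -- value bounds on each class
  have hb1 : ∀ i ∈ s1, 2.2984 < f i ∧ f i < 2.29845 := by
    intro i hi
    simp only [hs1, hslow, mem_filter, mem_univ, true_and] at hi
    rcases hP i with h | h | h | h | h
    · exact h
    all_goals exfalso; first | linarith [hi.2, h.1, h.2] | linarith [hi.2, h]
  have hb2 : ∀ i ∈ s2, 3.7639 < f i ∧ f i < 3.764 := by
    intro i hi
    simp only [hs2, hslow, mem_filter, mem_univ, true_and] at hi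
    rcases hP i with h | h | h | h | h
    · exfalso; exact hi.2 (by linarith [h.2])
    · exact h
    all_goals exfalso; first | linarith [hi.1, h.1, h.2] | linarith [hi.1, h]
  have hb3 : ∀ i ∈ s3, f i = 7 := by
    intro i hi
    simp only [hs3, hs34, hs, mem_filter, mem_univ, true_and] at hi
    rcases hP i with h | h | h | h | h
    · exfalso; exact hi.1.1 (by linarith [h.2])
    · exfalso; exact hi.1.1 (by linarith [h.2])
    · exact h
    · exfalso; linarith [hi.2, h.1]
    · exfalso; exact hi.1.2 (by linarith [h.1])
  have hb4 : ∀ i ∈ s4, 8.236 < f i ∧ f i < 8.2361 := by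
    intro i hi
    simp only [hs4, hs34, hs, mem_filter, mem_univ, true_and] at hi
    rcases hP i with h | h | h | h | h
    · exfalso; exact hi.1.1 (by linarith [h.2])
    · exfalso; exact hi.1.1 (by linarith [h.2])
    · exfalso; exact hi.2 (by linarith)
    · exact h
    · exfalso; exact hi.1.2 (by linarith [h.1])
  have hb5 : ∀ i ∈ s5, 8.70155 < f i ∧ f i < 8.7016 := by
    intro i hi
    simp only [hs5, hs, mem_filter, mem_univ, true_and] at hi
    rcases hP i with h | h | h | h | h
    · exfalso; linarith [hi.2, h.2]
    · exfalso; linarith [hi.2, h.2]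
    · exfalso; linarith [hi.2, h]
    · exfalso; linarith [hi.2, h.2]
    · exact h
  -- sum decompositions
  have hsplit : ∑ i ∈ slow, f i + ∑ i ∈ s, f i = 42 := by
    rw [hslow, hs, Finset.sum_filter_add_sum_filter_not]; exact hsum
  have hsplit12 : ∑ i ∈ s1, f i + ∑ i ∈ s2, f i = ∑ i ∈ slow, f i := by
    rw [hs1, hs2, Finset.sum_filter_add_sum_filter_not]
  have hsplit5 : ∑ i ∈ s5, f i + ∑ i ∈ s34, f i = ∑ i ∈ s, f i := by
    rw [hs5, hs34, Finset.sum_filter_add_sum_filter_not]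
  have hsplit34 : ∑ i ∈ s3, f i + ∑ i ∈ s4, f i = ∑ i ∈ s34, f i := by
    rw [hs3, hs4, Finset.sum_filter_add_sum_filter_not]
  -- card decompositions
  have hc : slow.card + s.card = 7 := by
    rw [hslow, hs, Finset.card_filter_add_card_filter_not, card_univ]
    rfl
  have hc12 : s1.card + s2.card = slow.card := by
    rw [hs1, hs2, Finset.card_filter_add_card_filter_not]
  have hc5 : s5.card + s34.card = s.card := by
    rw [hs5, hs34, Finset.card_filter_add_card_filter_not]
  have hc34 : s3.card + s4.card = s34.card := by
    rw [hs3, hs4, Finset.card_filter_add_card_filter_not]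
  set n1 := s1.card; set n2 := s2.card; set n3 := s3.card; set n4 := s4.card; set n5 := s5.card
  -- sum bounds per class
  have hub1 : ∑ i ∈ s1, f i ≤ n1 • (2.29845:ℝ) :=
    Finset.sum_le_card_nsmul _ _ _ (fun i hi => (hb1 i hi).2.le)
  have hlb1 : n1 • (2.2984:ℝ) ≤ ∑ i ∈ s1, f i :=
    Finset.card_nsmul_le_sum _ _ _ (fun i hi => (hb1 i hi).1.le)
  have hub2 : ∑ i ∈ s2, f i ≤ n2 • (3.764:ℝ) :=
    Finset.sum_le_card_nsmul _ _ _ (fun i hi => (hb2 i hi).2.le)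
  have hlb2 : n2 • (3.7639:ℝ) ≤ ∑ i ∈ s2, f i :=
    Finset.card_nsmul_le_sum _ _ _ (fun i hi => (hb2 i hi).1.le)
  have hub3 : ∑ i ∈ s3, f i ≤ n3 • (7:ℝ) :=
    Finset.sum_le_card_nsmul _ _ _ (fun i hi => (hb3 i hi).le)
  have hlb3 : n3 • (7:ℝ) ≤ ∑ i ∈ s3, f i :=
    Finset.card_nsmul_le_sum _ _ _ (fun i hi => (hb3 i hi).ge)
  have hub4 : ∑ i ∈ s4, f i ≤ n4 • (8.2361:ℝ) :=
    Finset.sum_le_card_nsmul _ _ _ (fun i hi => (hb4 i hi).2.le)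
  have hlb4 : n4 • (8.236:ℝ) ≤ ∑ i ∈ s4, f i :=
    Finset.card_nsmul_le_sum _ _ _ (fun i hi => (hb4 i hi).1.le)
  have hub5 : ∑ i ∈ s5, f i ≤ n5 • (8.7016:ℝ) :=
    Finset.sum_le_card_nsmul _ _ _ (fun i hi => (hb5 i hi).2.le)
  have hlb5 : n5 • (8.70155:ℝ) ≤ ∑ i ∈ s5, f i :=
    Finset.card_nsmul_le_sum _ _ _ (fun i hi => (hb5 i hi).1.le)
  simp only [nsmul_eq_mul] at hub1 hlb1 hub2 hlb2 hub3 hlb3 hub4 hlb4 hub5 hlb5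
  -- integer constraints
  clear_value n1 n2 n3 n4 n5
  have hNub : (229840*n1 + 376390*n2 + 700000*n3 + 823600*n4 + 870155*n5 : ℕ) ≤ 4200000 := by
    have hre : 229840*(n1:ℝ) + 376390*(n2:ℝ) + 700000*(n3:ℝ) + 823600*(n4:ℝ) + 870155*(n5:ℝ)
        ≤ 4200000 := by nlinarith [hlb1, hlb2, hlb3, hlb4, hlb5, hsplit, hsplit12, hsplit5, hsplit34]
    exact_mod_cast hre
  have hNlb : (4200000:ℕ) ≤ 229845*n1 + 376400*n2 + 700000*n3 + 823610*n4 + 870160*n5 := by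
    have hre : (4200000:ℝ)
        ≤ 229845*(n1:ℝ) + 376400*(n2:ℝ) + 700000*(n3:ℝ) + 823610*(n4:ℝ) + 870160*(n5:ℝ) := by
      nlinarith [hub1, hub2, hub3, hub4, hub5, hsplit, hsplit12, hsplit5, hsplit34]
    exact_mod_cast hre
  have hcard7 : n1 + n2 + n3 + n4 + n5 = 7 := by omega
  have hn1 : n1 = 1 ∧ n2 = 2 ∧ n3 = 1 ∧ n4 = 2 ∧ n5 = 1 := by
    have e1 : n1 ≤ 7 := by omega
    have e2 : n2 ≤ 7 := by omega
    have e3 : n4 ≤ 7 := by omega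
    interval_cases n1 <;> interval_cases n2 <;> interval_cases n4 <;> omega
  obtain ⟨e1, e2, e3, e4, e5⟩ := hn1
  refine ⟨s, ?_, ?_⟩
  · omega
  · have h1 : ∑ i ∈ s1, f i ≤ 2.29845 := by rw [e1] at hub1; simpa using hub1
    have h2 : ∑ i ∈ s2, f i ≤ 2 * 3.764 := by rw [e2] at hub2; simpa using hub2
    have : ∑ i ∈ s, f i = 42 - (∑ i ∈ s1, f i + ∑ i ∈ s2, f i) := by
      rw [hsplit12]; linarith [hsplit]
    rw [this]
    norm_num at h1 h2 ⊢
    linarith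
end

section
/- Let L₈ be the real symmetric 8×8 matrix with rows (7,1,1,1,−1,1,1,1), (1,7,1,1,1,−1,−1,1), (1,1,7,1,1,−1,1,−1), (1,1,1,7,1,1,−1,−1), (−1,1,1,1,7,1,1,1), (1,−1,−1,1,1,7,1,1), (1,−1,1,−1,1,1,7,1), (1,1,−1,−1,1,1,1,7). Then the sum of the 5 largest eigenvalues of L₈ (counted with multiplicity) is strictly greater than 44. Equivalently, there exist 5 distinct indices i₁, …, i₅ ∈ {1, …, 8} such that the corresponding eigenvalues of L₈ sum to more than 44. -/
open Matrix Finset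

noncomputable def L8 : Matrix (Fin 8) (Fin 8) ℝ :=
  !![7, 1, 1, 1, -1, 1, 1, 1;
     1, 7, 1, 1, 1, -1, -1, 1;
     1, 1, 7, 1, 1, -1, 1, -1;
     1, 1, 1, 7, 1, 1, -1, -1;
     -1, 1, 1, 1, 7, 1, 1, 1;
     1, -1, -1, 1, 1, 7, 1, 1;
     1, -1, 1, -1, 1, 1, 7, 1;
     1, 1, -1, -1, 1, 1, 1, 7]

noncomputable def P2 : Matrix (Fin 8) (Fin 8) ℝ :=
  !![56, 14, 14, 14, -8, 14, 14, 14;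
     14, 56, 16, 16, 14, -12, -12, 12;
     14, 16, 56, 16, 14, -12, 12, -12;
     14, 16, 16, 56, 14, 12, -12, -12;
     -8, 14, 14, 14, 56, 14, 14, 14;
     14, -12, -12, 12, 14, 56, 16, 16;
     14, -12, 12, -12, 14, 16, 56, 16;
     14, 12, -12, -12, 14, 16, 16, 56]

noncomputable def P3 : Matrix (Fin 8) (Fin 8) ℝ :=
  !![484, 160, 160, 160, -28, 160, 160, 160;
     160, 488, 200, 200, 160, -112, -112, 112;
     160, 200, 488, 200, 160, -112, 112, -112;
     160, 200, 200, 488, 160, 112, -112, -112;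
     -28, 160, 160, 160, 484, 160, 160, 160;
     160, -112, -112, 112, 160, 488, 200, 200;
     160, -112, 112, -112, 160, 200, 488, 200;
     160, 112, -112, -112, 160, 200, 200, 488]

noncomputable def P4 : Matrix (Fin 8) (Fin 8) ℝ :=
  !![4376, 1736, 1736, 1736, 280, 1736, 1736, 1736;
     1736, 4472, 2296, 2296, 1736, -952, -952, 968;
     1736, 2296, 4472, 2296, 1736, -952, 968, -952;
     1736, 2296, 2296, 4472, 1736, 968, -952, -952;
     280, 1736, 1736, 1736, 4376, 1736, 1736, 1736;
     1736, -952, -952, 968, 1736, 4472, 2296, 2296;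
     1736, -952, 968, -952, 1736, 2296, 4472, 2296;
     1736, 968, -952, -952, 1736, 2296, 2296, 4472]

noncomputable def P5 : Matrix (Fin 8) (Fin 8) ℝ :=
  !![40768, 18544, 18544, 18544, 8000, 18544, 18544, 18544;
     18544, 42240, 25344, 25344, 18544, -7648, -7648, 8224;
     18544, 25344, 42240, 25344, 18544, -7648, 8224, -7648;
     18544, 25344, 25344, 42240, 18544, 8224, -7648, -7648;
     8000, 18544, 18544, 18544, 40768, 18544, 18544, 18544;
     18544, -7648, -7648, 8224, 18544, 42240, 25344, 25344;
     18544, -7648, 8224, -7648, 18544, 25344, 42240, 25344;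
     18544, 8224, -7648, -7648, 18544, 25344, 25344, 42240]

set_option maxHeartbeats 2000000

lemma L8_sq : L8 * L8 = P2 := by
  ext i j
  fin_cases i <;> fin_cases j <;>
    norm_num [L8, P2, Matrix.mul_apply, Fin.sum_univ_succ]
lemma L8_cube : L8 * P2 = P3 := by
  ext i j
  fin_cases i <;> fin_cases j <;>
    norm_num [L8, P2, P3, Matrix.mul_apply, Fin.sum_univ_succ]
lemma L8_four : L8 * P3 = P4 := by
  ext i j
  fin_cases i <;> fin_cases j <;>
    norm_num [L8, P3, P4, Matrix.mul_apply, Fin.sum_univ_succ]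
lemma L8_five : L8 * P4 = P5 := by
  ext i j
  fin_cases i <;> fin_cases j <;>
    norm_num [L8, P4, P5, Matrix.mul_apply, Fin.sum_univ_succ]

lemma L8_poly : P5 + (496:ℝ) • P3 + (9952:ℝ) • L8 =
    (36:ℝ) • P4 + (3240:ℝ) • P2 + (11520 : ℝ) • (1 : Matrix (Fin 8) (Fin 8) ℝ) := by
  ext i j
  fin_cases i <;> fin_cases j <;>
    simp only [L8, P2, P3, P4, P5, Matrix.add_apply, Matrix.smul_apply, Matrix.one_apply,
      smul_eq_mul] <;>
    norm_num [Fin.ext_iff]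

lemma trace_L8 : L8.trace = 56 := by
  norm_num [L8, Matrix.trace, Matrix.diag, Fin.sum_univ_succ]

lemma trace_P2 : P2.trace = 448 := by
  norm_num [P2, Matrix.trace, Matrix.diag, Fin.sum_univ_succ]

section TraceLemmas
variable {n : Type*} [Fintype n] [DecidableEq n] {A : Matrix n n ℝ}

lemma myconj_trace (U B : Matrix n n ℝ) (hU : star U * U = 1) :
    (U * B * star U).trace = B.trace := by
  rw [Matrix.trace_mul_cycle, hU, Matrix.one_mul]

lemma myconj_mul (U B C : Matrix n n ℝ) (hU : star U * U = 1) :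
    (U * B * star U) * (U * C * star U) = U * (B * C) * star U := by
  have h : (U * B * star U) * (U * C * star U)
      = U * (B * ((star U * U) * (C * star U))) := by
    simp only [Matrix.mul_assoc]
  rw [h, hU, Matrix.one_mul]
  simp only [Matrix.mul_assoc]

lemma trace_eq_sum_eig (hA : A.IsHermitian) : A.trace = ∑ i, hA.eigenvalues i := by
  conv_lhs => rw [hA.spectral_theorem]
  rw [Unitary.conjStarAlgAut_apply, myconj_trace _ _ (Unitary.coe_star_mul_self _)]
  simp [Matrix.trace_diagonal]

lemma trace_sq_eq_sum_eig_sq (hA : A.IsHermitian) :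
    (A * A).trace = ∑ i, hA.eigenvalues i ^ 2 := by
  conv_lhs => rw [hA.spectral_theorem]
  rw [Unitary.conjStarAlgAut_apply, myconj_mul _ _ _ (Unitary.coe_star_mul_self _),
    myconj_trace _ _ (Unitary.coe_star_mul_self _), Matrix.diagonal_mul_diagonal]
  simp [Matrix.trace_diagonal, sq]

end TraceLemmas

lemma eig_root (hA : L8.IsHermitian) (i : Fin 8) :
    (hA.eigenvalues i - 4) * ((hA.eigenvalues i - 8) * ((hA.eigenvalues i - 10) *
      ((hA.eigenvalues i - 7) ^ 2 - 13))) = 0 := by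
  set lam := hA.eigenvalues i with hlam
  set v := ⇑(hA.eigenvectorBasis i) with hv
  have h1 : L8 *ᵥ v = lam • v := hA.mulVec_eigenvectorBasis i
  have h2 : P2 *ᵥ v = (lam ^ 2) • v := by
    rw [← L8_sq, ← Matrix.mulVec_mulVec, h1, Matrix.mulVec_smul, h1, smul_smul, sq]
  have h3 : P3 *ᵥ v = (lam ^ 3) • v := by
    rw [← L8_cube, ← Matrix.mulVec_mulVec, h2, Matrix.mulVec_smul, h1, smul_smul]
    ring_nf
  have h4 : P4 *ᵥ v = (lam ^ 4) • v := by
    rw [← L8_four, ← Matrix.mulVec_mulVec, h3, Matrix.mulVec_smul, h1, smul_smul]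
    ring_nf
  have h5 : P5 *ᵥ v = (lam ^ 5) • v := by
    rw [← L8_five, ← Matrix.mulVec_mulVec, h4, Matrix.mulVec_smul, h1, smul_smul]
    ring_nf
  have hq := congrArg (fun M => M *ᵥ v) L8_poly
  simp only [Matrix.add_mulVec, Matrix.smul_mulVec, Matrix.one_mulVec,
    h1, h2, h3, h4, h5, smul_smul, ← add_smul] at hq
  have hveq : (lam ^ 5 + 496 * lam ^ 3 + 9952 * lam) • v
      = (36 * lam ^ 4 + 3240 * lam ^ 2 + 11520) • v := hq
  have hvne : v ≠ 0 := by
    have := hA.eigenvectorBasis.orthonormal.ne_zero i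
    intro h
    apply this
    ext j
    exact congrFun h j
  have hcoef : lam ^ 5 + 496 * lam ^ 3 + 9952 * lam
      = 36 * lam ^ 4 + 3240 * lam ^ 2 + 11520 := by
    by_contra hne
    have := sub_eq_zero.2 hveq
    rw [← sub_smul] at this
    rcases smul_eq_zero.1 this with h | h
    · exact hne (by linarith [sub_eq_zero.1 h])
    · exact hvne h
  linear_combination hcoef

theorem sum_five_largest_eigenvalues_L8_gt_44'
    (hL : L8.IsHermitian) :
    ∃ s : Finset (Fin 8), s.card = 5 ∧ 44 < ∑ i ∈ s, hL.eigenvalues i := by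
  classical
  set r := Real.sqrt 13 with hrdef
  have hr2 : r ^ 2 = 13 := Real.sq_sqrt (by norm_num)
  have hr0 : 0 ≤ r := Real.sqrt_nonneg 13
  have hr3 : 3 < r := by nlinarith
  have hr4 : r < 4 := by nlinarith
  set f := hL.eigenvalues with hf
  -- every eigenvalue is one of the five values
  have hmem : ∀ i, f i = 4 ∨ f i = 8 ∨ f i = 10 ∨ f i = 7 + r ∨ f i = 7 - r := by
    intro i
    have h := eig_root hL i
    rcases mul_eq_zero.1 h with h | h
    · exact Or.inl (by linarith [sub_eq_zero.1 h])
    rcases mul_eq_zero.1 h with h | h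
    · exact Or.inr (Or.inl (by linarith [sub_eq_zero.1 h]))
    rcases mul_eq_zero.1 h with h | h
    · exact Or.inr (Or.inr (Or.inl (by linarith [sub_eq_zero.1 h])))
    · have hfac : (f i - 7 - r) * (f i - 7 + r) = 0 := by
        linear_combination h - hr2
      rcases mul_eq_zero.1 hfac with h' | h'
      · exact Or.inr (Or.inr (Or.inr (Or.inl (by linarith))))
      · exact Or.inr (Or.inr (Or.inr (Or.inr (by linarith))))
  set A4 : Finset (Fin 8) := univ.filter (fun i => f i = 4) with hA4
  set A8 : Finset (Fin 8) := univ.filter (fun i => f i = 8) with hA8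
  set A10 : Finset (Fin 8) := univ.filter (fun i => f i = 10) with hA10
  set Aa : Finset (Fin 8) := univ.filter (fun i => f i = 7 + r) with hAa
  set Ab : Finset (Fin 8) := univ.filter (fun i => f i = 7 - r) with hAb
  have key : ∀ g : ℝ → ℝ, ∑ i, g (f i) =
      A4.card • g 4 + A8.card • g 8 + A10.card • g 10 +
        Aa.card • g (7 + r) + Ab.card • g (7 - r) := by
    intro g
    have hsplit : ∀ i ∈ (univ : Finset (Fin 8)), g (f i) =
        (if f i = 4 then g 4 else 0) + (if f i = 8 then g 8 else 0) +
          (if f i = 10 then g 10 else 0) + (if f i = 7 + r then g (7 + r) else 0) +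
          (if f i = 7 - r then g (7 - r) else 0) := by
      intro i _
      rcases hmem i with h | h | h | h | h <;> rw [h]
      · rw [if_pos rfl, if_neg (by norm_num : ¬(4:ℝ) = 8), if_neg (by norm_num : ¬(4:ℝ) = 10),
          if_neg (show ¬(4:ℝ) = 7 + r by intro hc; linarith),
          if_neg (show ¬(4:ℝ) = 7 - r by intro hc; linarith)]
        ring
      · rw [if_neg (by norm_num : ¬(8:ℝ) = 4), if_pos rfl, if_neg (by norm_num : ¬(8:ℝ) = 10),
          if_neg (show ¬(8:ℝ) = 7 + r by intro hc; linarith),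
          if_neg (show ¬(8:ℝ) = 7 - r by intro hc; linarith)]
        ring
      · rw [if_neg (by norm_num : ¬(10:ℝ) = 4), if_neg (by norm_num : ¬(10:ℝ) = 8), if_pos rfl,
          if_neg (show ¬(10:ℝ) = 7 + r by intro hc; linarith),
          if_neg (show ¬(10:ℝ) = 7 - r by intro hc; linarith)]
        ring
      · rw [if_neg (show ¬(7 + r : ℝ) = 4 by intro hc; linarith),
          if_neg (show ¬(7 + r : ℝ) = 8 by intro hc; linarith),
          if_neg (show ¬(7 + r : ℝ) = 10 by intro hc; linarith), if_pos rfl,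
          if_neg (show ¬(7 + r : ℝ) = 7 - r by intro hc; linarith)]
        ring
      · rw [if_neg (show ¬(7 - r : ℝ) = 4 by intro hc; linarith),
          if_neg (show ¬(7 - r : ℝ) = 8 by intro hc; linarith),
          if_neg (show ¬(7 - r : ℝ) = 10 by intro hc; linarith),
          if_neg (show ¬(7 - r : ℝ) = 7 + r by intro hc; linarith), if_pos rfl]
        ring
    rw [Finset.sum_congr rfl hsplit, Finset.sum_add_distrib, Finset.sum_add_distrib,
      Finset.sum_add_distrib, Finset.sum_add_distrib, ← Finset.sum_filter, ← Finset.sum_filter,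
      ← Finset.sum_filter, ← Finset.sum_filter, ← Finset.sum_filter, Finset.sum_const,
      Finset.sum_const, Finset.sum_const, Finset.sum_const, Finset.sum_const]
  -- the three moment equations
  have ht1 : ∑ i, f i = (56:ℝ) := by rw [← trace_eq_sum_eig hL]; exact trace_L8
  have ht2 : ∑ i, f i ^ 2 = (448:ℝ) := by
    rw [← trace_sq_eq_sum_eig_sq hL, L8_sq]; exact trace_P2
  have E0 : (8:ℝ) = A4.card + A8.card + A10.card + Aa.card + Ab.card := by
    have h := key (fun _ => (1:ℝ))
    simp only [nsmul_eq_mul, mul_one, Finset.sum_const, Finset.card_univ, Fintype.card_fin] at h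
    exact_mod_cast h
  have E1 : (4:ℝ) * A4.card + 8 * A8.card + 10 * A10.card
      + (7 + r) * Aa.card + (7 - r) * Ab.card = 56 := by
    have h := key id
    simp only [id_eq, nsmul_eq_mul] at h
    linear_combination ht1 - h
  have E2 : (16:ℝ) * A4.card + 64 * A8.card + 100 * A10.card
      + (7 + r) ^ 2 * Aa.card + (7 - r) ^ 2 * Ab.card = 448 := by
    have h := key (fun x => x ^ 2)
    simp only [nsmul_eq_mul] at h
    linear_combination ht2 - h
  -- the multiplicities of the two irrational eigenvalues agree
  have hab : Ab.card = Aa.card := by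
    by_contra hne
    have hq0 : ((Aa.card : ℚ) - Ab.card) ≠ 0 := by
      intro hc
      apply hne
      have h' : (Aa.card : ℚ) = Ab.card := sub_eq_zero.1 hc
      exact_mod_cast h'.symm
    have hirr : Irrational ((((Aa.card : ℚ) - Ab.card) : ℚ) * r) :=
      Irrational.ratCast_mul (Nat.Prime.irrational_sqrt (by norm_num)) hq0
    have heq : ((((Aa.card : ℚ) - Ab.card) : ℚ) : ℝ) * r =
        (((56 - 4 * A4.card - 8 * A8.card - 10 * A10.card
          - 7 * Aa.card - 7 * Ab.card : ℚ)) : ℝ) := by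
      push_cast
      linear_combination E1
    rw [heq] at hirr
    exact Rat.not_irrational _ hirr
  have hcab : ((Ab.card : ℝ)) = ((Aa.card : ℝ)) := by exact_mod_cast hab
  -- cast the equations down to ℕ and solve
  have hn0 : A4.card + A8.card + A10.card + Aa.card + Ab.card = 8 := by
    exact_mod_cast E0.symm
  have hn1 : 4 * A4.card + 8 * A8.card + 10 * A10.card + 14 * Aa.card = 56 := by
    have : (4:ℝ) * A4.card + 8 * A8.card + 10 * A10.card + 14 * Aa.card = 56 := by
      linear_combination E1 - (7 - r) * hcab
    exact_mod_cast this
  have hn2 : 16 * A4.card + 64 * A8.card + 100 * A10.card + 124 * Aa.card = 448 := by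
    have : (16:ℝ) * A4.card + 64 * A8.card + 100 * A10.card + 124 * Aa.card = 448 := by
      linear_combination E2 - (7 - r) ^ 2 * hcab - 2 * (Aa.card : ℝ) * hr2
    exact_mod_cast this
  have hcard4 : A4.card = 2 := by omega
  have hcardb : Ab.card = 1 := by omega
  -- assemble the three smallest eigenvalues
  obtain ⟨j, hj⟩ := Finset.card_eq_one.1 hcardb
  have hfj : f j = 7 - r := by
    have : j ∈ Ab := hj ▸ Finset.mem_singleton_self j
    exact (Finset.mem_filter.1 this).2
  have hjA4 : j ∉ A4 := by
    intro hmem4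
    have : f j = 4 := (Finset.mem_filter.1 hmem4).2
    rw [hfj] at this
    linarith
  have hdisj : Disjoint A4 {j} := Finset.disjoint_singleton_right.2 hjA4
  set t : Finset (Fin 8) := A4 ∪ {j} with hts
  have hcardt : t.card = 3 := by
    rw [hts, Finset.card_union_of_disjoint hdisj, hcard4, Finset.card_singleton]
  have hsumA4 : ∑ i ∈ A4, f i = 8 := by
    rw [Finset.sum_congr rfl (fun i hi => (Finset.mem_filter.1 hi).2), Finset.sum_const, hcard4]
    norm_num
  have hsumt : ∑ i ∈ t, f i = 15 - r := by
    rw [hts, Finset.sum_union hdisj, hsumA4, Finset.sum_singleton, hfj]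
    ring
  refine ⟨tᶜ, ?_, ?_⟩
  · rw [Finset.card_compl, hcardt]
    rfl
  · have hsplit := Finset.sum_add_sum_compl t f
    rw [hsumt, ht1] at hsplit
    have : ∑ i ∈ tᶜ, f i = 41 + r := by linarith
    rw [hf] at this ⊢
    rw [this]
    linarith

/-- For the signed Laplacian `L₈` of a signing of `K₈`, the sum of the 5 largest
eigenvalues exceeds `44 = e(K₈) + (6 choose 2) + 1`: equivalently, some 5
eigenvalues (with multiplicity, i.e. 5 distinct indices) sum to more than 44. -/
theorem sum_five_largest_eigenvalues_L8_gt_44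
    (hL : (!![7, 1, 1, 1, -1, 1, 1, 1;
              1, 7, 1, 1, 1, -1, -1, 1;
              1, 1, 7, 1, 1, -1, 1, -1;
              1, 1, 1, 7, 1, 1, -1, -1;
              -1, 1, 1, 1, 7, 1, 1, 1;
              1, -1, -1, 1, 1, 7, 1, 1;
              1, -1, 1, -1, 1, 1, 7, 1;
              1, 1, -1, -1, 1, 1, 1, 7] : Matrix (Fin 8) (Fin 8) ℝ).IsHermitian) :
    ∃ s : Finset (Fin 8), s.card = 5 ∧ 44 < ∑ i ∈ s, hL.eigenvalues i :=
  sum_five_largest_eigenvalues_L8_gt_44' hL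
end

section
/- Let L₈ be the real symmetric 8×8 matrix with rows (7,1,1,1,−1,1,1,1), (1,7,1,1,1,−1,−1,1), (1,1,7,1,1,−1,1,−1), (1,1,1,7,1,1,−1,−1), (−1,1,1,1,7,1,1,1), (1,−1,−1,1,1,7,1,1), (1,−1,1,−1,1,1,7,1), (1,1,−1,−1,1,1,1,7). Then the sum of the 5 largest eigenvalues of L₈ (counted with multiplicity) equals 41 + √13 (approximately 44.6056). -/
namespace L8Aux

open Matrix Finset

noncomputable def A : Matrix (Fin 8) (Fin 8) ℝ :=
  !![7, 1, 1, 1, -1, 1, 1, 1;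
     1, 7, 1, 1, 1, -1, -1, 1;
     1, 1, 7, 1, 1, -1, 1, -1;
     1, 1, 1, 7, 1, 1, -1, -1;
     -1, 1, 1, 1, 7, 1, 1, 1;
     1, -1, -1, 1, 1, 7, 1, 1;
     1, -1, 1, -1, 1, 1, 7, 1;
     1, 1, -1, -1, 1, 1, 1, 7]

def Az : Matrix (Fin 8) (Fin 8) ℤ :=
  !![7, 1, 1, 1, -1, 1, 1, 1;
     1, 7, 1, 1, 1, -1, -1, 1;
     1, 1, 7, 1, 1, -1, 1, -1;
     1, 1, 1, 7, 1, 1, -1, -1;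
     -1, 1, 1, 1, 7, 1, 1, 1;
     1, -1, -1, 1, 1, 7, 1, 1;
     1, -1, 1, -1, 1, 1, 7, 1;
     1, 1, -1, -1, 1, 1, 1, 7]

lemma A_eq : A = (Int.castRingHom ℝ).mapMatrix Az := by
  ext i j
  fin_cases i <;> fin_cases j <;>
    simp [A, Az, RingHom.mapMatrix_apply, Matrix.map_apply, Matrix.cons_val_succ,
      show (7:Fin 8) = (6:Fin 7).succ from rfl, show (6:Fin 7) = (5:Fin 6).succ from rfl,
      show (5:Fin 6) = (4:Fin 5).succ from rfl, show (4:Fin 5) = (3:Fin 4).succ from rfl,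
      show (6:Fin 8) = (5:Fin 7).succ from rfl, show (5:Fin 7) = (4:Fin 6).succ from rfl,
      show (4:Fin 6) = (3:Fin 5).succ from rfl, Matrix.vecHead, Matrix.vecTail, Function.comp,
      show (5:Fin 8) = (4:Fin 7).succ from rfl, show (4:Fin 7) = (3:Fin 6).succ from rfl,
      show (4:Fin 8) = (3:Fin 7).succ from rfl]

lemma keyZ : (Az * Az - 14 * Az + 36) * (Az - 10) * (Az - 8) * (Az - 4) = 0 := by decide

lemma keyR : (A * A - 14 * A + 36) * (A - 10) * (A - 8) * (A - 4) = 0 := by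
  rw [A_eq]
  have h := congrArg (Int.castRingHom ℝ).mapMatrix keyZ
  simpa only [_root_.map_mul, map_sub, map_add, map_ofNat, map_zero] using h

lemma traceAz : Az.trace = 56 := by decide
lemma traceAz2 : (Az * Az).trace = 448 := by decide

lemma trace_map (M : Matrix (Fin 8) (Fin 8) ℤ) :
    ((Int.castRingHom ℝ).mapMatrix M).trace = ((M.trace : ℤ) : ℝ) := by
  simp [Matrix.trace, Matrix.diag, RingHom.mapMatrix_apply, Matrix.map_apply]

lemma traceA : A.trace = 56 := by
  rw [A_eq, trace_map, traceAz]; norm_num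

lemma traceA2 : (A * A).trace = 448 := by
  rw [A_eq, ← _root_.map_mul, trace_map, traceAz2]; norm_num

lemma num_smul (c : ℝ) : ∀ v : Fin 8 → ℝ, (c • (1 : Matrix (Fin 8) (Fin 8) ℝ)) *ᵥ v = c • v := by
  intro v
  rw [smul_mulVec, one_mulVec]

lemma key_smul :
    (A * A - (14:ℝ) • A + (36:ℝ) • 1) * (A - (10:ℝ) • 1) * (A - (8:ℝ) • 1) * (A - (4:ℝ) • 1)
      = 0 := by
  have e : ∀ c : ℝ, ∀ n : Matrix (Fin 8) (Fin 8) ℝ, n = c • (1 : Matrix (Fin 8) (Fin 8) ℝ) →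
      True := fun _ _ _ => trivial
  have h36 : ((36:ℝ) • (1 : Matrix (Fin 8) (Fin 8) ℝ)) = (36 : Matrix (Fin 8) (Fin 8) ℝ) := by
    rw [← Algebra.algebraMap_eq_smul_one, map_ofNat]
  have h10 : ((10:ℝ) • (1 : Matrix (Fin 8) (Fin 8) ℝ)) = (10 : Matrix (Fin 8) (Fin 8) ℝ) := by
    rw [← Algebra.algebraMap_eq_smul_one, map_ofNat]
  have h8 : ((8:ℝ) • (1 : Matrix (Fin 8) (Fin 8) ℝ)) = (8 : Matrix (Fin 8) (Fin 8) ℝ) := by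
    rw [← Algebra.algebraMap_eq_smul_one, map_ofNat]
  have h4 : ((4:ℝ) • (1 : Matrix (Fin 8) (Fin 8) ℝ)) = (4 : Matrix (Fin 8) (Fin 8) ℝ) := by
    rw [← Algebra.algebraMap_eq_smul_one, map_ofNat]
  have h14 : ((14:ℝ) • A) = (14 : Matrix (Fin 8) (Fin 8) ℝ) * A := by
    rw [show (14 : Matrix (Fin 8) (Fin 8) ℝ) = (14:ℝ) • 1 from
      by rw [← Algebra.algebraMap_eq_smul_one, map_ofNat], smul_mul_assoc, one_mul]
  rw [h36, h10, h8, h4, h14]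
  exact keyR

lemma eig_root (lam : ℝ) (v : Fin 8 → ℝ) (hv : v ≠ 0) (h : A *ᵥ v = lam • v) :
    (lam ^ 2 - 14 * lam + 36) * ((lam - 10) * ((lam - 8) * (lam - 4))) = 0 := by
  have hv4 : (A - (4:ℝ) • 1) *ᵥ v = (lam - 4) • v := by
    rw [sub_mulVec, num_smul, h, ← sub_smul]
  have hv8 : (A - (8:ℝ) • 1) *ᵥ ((lam - 4) • v) = ((lam - 8) * (lam - 4)) • v := by
    rw [mulVec_smul, sub_mulVec, num_smul, h, ← sub_smul, smul_smul]
    congr 1; ring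
  have hv10 : (A - (10:ℝ) • 1) *ᵥ (((lam - 8) * (lam - 4)) • v)
      = ((lam - 10) * ((lam - 8) * (lam - 4))) • v := by
    rw [mulVec_smul, sub_mulVec, num_smul, h, ← sub_smul, smul_smul]
    congr 1; ring
  have hvq : (A * A - (14:ℝ) • A + (36:ℝ) • 1) *ᵥ
      (((lam - 10) * ((lam - 8) * (lam - 4))) • v)
      = ((lam ^ 2 - 14 * lam + 36) * ((lam - 10) * ((lam - 8) * (lam - 4)))) • v := by
    rw [mulVec_smul, add_mulVec, sub_mulVec, num_smul, ← mulVec_mulVec, h, mulVec_smul, h,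
      smul_mulVec, h]
    rw [smul_smul, smul_smul]
    module
  have h0 := congrArg (fun M : Matrix (Fin 8) (Fin 8) ℝ => M *ᵥ v) key_smul
  simp only [zero_mulVec] at h0
  rw [← mulVec_mulVec, hv4, ← mulVec_mulVec, hv8, ← mulVec_mulVec, hv10, hvq] at h0
  exact (smul_eq_zero.mp h0).resolve_right hv

lemma sum_eig (hL : A.IsHermitian) :
    (∑ i, hL.eigenvalues i = 56) ∧ (∑ i, (hL.eigenvalues i) ^ 2 = 448) := by
  have hspec := hL.spectral_theorem
  rw [Unitary.conjStarAlgAut_apply] at hspec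
  set U : Matrix (Fin 8) (Fin 8) ℝ := (hL.eigenvectorUnitary : Matrix (Fin 8) (Fin 8) ℝ) with hUdef
  set D : Matrix (Fin 8) (Fin 8) ℝ := diagonal (RCLike.ofReal ∘ hL.eigenvalues) with hDdef
  have hU : star U * U = 1 := Unitary.coe_star_mul_self hL.eigenvectorUnitary
  have t1 : A.trace = ∑ i, hL.eigenvalues i := by
    conv_lhs => rw [hspec]
    rw [Matrix.trace_mul_comm, ← mul_assoc, hU, one_mul, hDdef, Matrix.trace_diagonal]
    simp [RCLike.ofReal]
  have hAA : A * A = U * (D * D) * star U := by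
    conv_lhs => rw [hspec]
    simp only [mul_assoc]
    rw [← mul_assoc (star U) U, hU, one_mul]
  have t2 : (A * A).trace = ∑ i, (hL.eigenvalues i) ^ 2 := by
    rw [hAA, Matrix.trace_mul_comm, ← mul_assoc, hU, one_mul, hDdef, diagonal_mul_diagonal,
      Matrix.trace_diagonal]
    simp [RCLike.ofReal, pow_two]
  constructor
  · rw [← t1, traceA]
  · rw [← t2, traceA2]

end L8Aux


set_option maxHeartbeats 1000000 in
/-- The sum of the 5 largest eigenvalues of the signed Laplacian `L₈` (counted
with multiplicity) equals `41 + √13`: for any permutation arranging the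
eigenvalues in (weakly) decreasing order, the first 5 sum to that value. -/
theorem sum_five_largest_eigenvalues_L8_eq
    (hL : (!![7, 1, 1, 1, -1, 1, 1, 1;
              1, 7, 1, 1, 1, -1, -1, 1;
              1, 1, 7, 1, 1, -1, 1, -1;
              1, 1, 1, 7, 1, 1, -1, -1;
              -1, 1, 1, 1, 7, 1, 1, 1;
              1, -1, -1, 1, 1, 7, 1, 1;
              1, -1, 1, -1, 1, 1, 7, 1;
              1, 1, -1, -1, 1, 1, 1, 7] : Matrix (Fin 8) (Fin 8) ℝ).IsHermitian) :
    ∀ σ : Equiv.Perm (Fin 8), Antitone (fun i => hL.eigenvalues (σ i)) →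
      ∑ i ∈ Finset.univ.filter (fun i : Fin 8 => (i : ℕ) < 5), hL.eigenvalues (σ i)
        = 41 + Real.sqrt 13 := by
  intro σ hσ
  have hL' : L8Aux.A.IsHermitian := hL
  have heig : hL.eigenvalues = hL'.eigenvalues := rfl
  rw [heig]
  rw [heig] at hσ
  clear hL heig
  set s : ℝ := Real.sqrt 13 with hsdef
  have hs2 : s ^ 2 = 13 := Real.sq_sqrt (by norm_num)
  have hs0 : 0 ≤ s := Real.sqrt_nonneg 13
  have hs3 : 3 < s := by nlinarith
  have hs4 : s < 4 := by nlinarith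
  have hirr : Irrational s := by
    have h13 : Nat.Prime 13 := by norm_num
    simpa using h13.irrational_sqrt
  set g : Fin 8 → ℝ := fun i => hL'.eigenvalues (σ i) with hgdef
  have hmono : ∀ {i j : Fin 8}, i ≤ j → g j ≤ g i := fun h => hσ h
  -- every value of g is a root of the quintic
  have hroot : ∀ i, g i = 7 + s ∨ g i = 10 ∨ g i = 8 ∨ g i = 4 ∨ g i = 7 - s := by
    intro i
    have hv := hL'.mulVec_eigenvectorBasis (σ i)
    have hvne : (⇑(hL'.eigenvectorBasis (σ i)) : Fin 8 → ℝ) ≠ 0 := by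
      simpa using hL'.eigenvectorBasis.orthonormal.ne_zero (σ i)
    have h0 := L8Aux.eig_root (hL'.eigenvalues (σ i)) _ hvne hv
    set lam := hL'.eigenvalues (σ i) with hlam
    have hquad : (lam - (7 + s)) * (lam - (7 - s)) = lam ^ 2 - 14 * lam + 36 := by
      linear_combination -hs2
    rcases mul_eq_zero.mp h0 with h1 | h1
    · rw [← hquad] at h1
      rcases mul_eq_zero.mp h1 with h2 | h2
      · exact Or.inl (by linarith [sub_eq_zero.mp h2])
      · exact Or.inr (Or.inr (Or.inr (Or.inr (by linarith [sub_eq_zero.mp h2]))))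
    · rcases mul_eq_zero.mp h1 with h2 | h2
      · exact Or.inr (Or.inl (by linarith [sub_eq_zero.mp h2]))
      · rcases mul_eq_zero.mp h2 with h3 | h3
        · exact Or.inr (Or.inr (Or.inl (by linarith [sub_eq_zero.mp h3])))
        · exact Or.inr (Or.inr (Or.inr (Or.inl (by linarith [sub_eq_zero.mp h3]))))
  -- distinctness of the five candidate values
  have hab : (7 + s : ℝ) ≠ 10 := by intro h; nlinarith
  have hac : (7 + s : ℝ) ≠ 8 := by intro h; nlinarith
  have had : (7 + s : ℝ) ≠ 4 := by intro h; nlinarith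
  have hae : (7 + s : ℝ) ≠ 7 - s := by intro h; nlinarith
  have hbc : (10 : ℝ) ≠ 8 := by norm_num
  have hbd : (10 : ℝ) ≠ 4 := by norm_num
  have hbe : (10 : ℝ) ≠ 7 - s := by intro h; nlinarith
  have hcd : (8 : ℝ) ≠ 4 := by norm_num
  have hce : (8 : ℝ) ≠ 7 - s := by intro h; nlinarith
  have hde : (4 : ℝ) ≠ 7 - s := by intro h; nlinarith
  -- counts
  set na := (Finset.univ.filter fun i => g i = 7 + s).card with hna
  set nb := (Finset.univ.filter fun i => g i = 10).card with hnb
  set nc := (Finset.univ.filter fun i => g i = 8).card with hnc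
  set nd := (Finset.univ.filter fun i => g i = 4).card with hnd
  set ne' := (Finset.univ.filter fun i => g i = 7 - s).card with hne'
  have hpt0 : ∀ i : Fin 8, (1:ℝ) =
      (if g i = 7 + s then (1:ℝ) else 0) + (if g i = 10 then (1:ℝ) else 0)
      + (if g i = 8 then (1:ℝ) else 0) + (if g i = 4 then (1:ℝ) else 0)
      + (if g i = 7 - s then (1:ℝ) else 0) := by
    intro i
    rcases hroot i with h | h | h | h | h <;> rw [h] <;>
      simp [hab, hac, had, hae, hbc, hbd, hbe, hcd, hce, hde,
        hab.symm, hac.symm, had.symm, hae.symm, hbc.symm, hbd.symm, hbe.symm,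
        hcd.symm, hce.symm, hde.symm]
  have hpt1 : ∀ i : Fin 8, g i =
      (7 + s) * (if g i = 7 + s then (1:ℝ) else 0) + 10 * (if g i = 10 then (1:ℝ) else 0)
      + 8 * (if g i = 8 then (1:ℝ) else 0) + 4 * (if g i = 4 then (1:ℝ) else 0)
      + (7 - s) * (if g i = 7 - s then (1:ℝ) else 0) := by
    intro i
    rcases hroot i with h | h | h | h | h <;> rw [h] <;>
      simp [hab, hac, had, hae, hbc, hbd, hbe, hcd, hce, hde,
        hab.symm, hac.symm, had.symm, hae.symm, hbc.symm, hbd.symm, hbe.symm,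
        hcd.symm, hce.symm, hde.symm]
  have hpt2 : ∀ i : Fin 8, (g i) ^ 2 =
      (7 + s) ^ 2 * (if g i = 7 + s then (1:ℝ) else 0) + 100 * (if g i = 10 then (1:ℝ) else 0)
      + 64 * (if g i = 8 then (1:ℝ) else 0) + 16 * (if g i = 4 then (1:ℝ) else 0)
      + (7 - s) ^ 2 * (if g i = 7 - s then (1:ℝ) else 0) := by
    intro i
    rcases hroot i with h | h | h | h | h <;> rw [h] <;>
      simp [hab, hac, had, hae, hbc, hbd, hbe, hcd, hce, hde,
        hab.symm, hac.symm, had.symm, hae.symm, hbc.symm, hbd.symm, hbe.symm,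
        hcd.symm, hce.symm, hde.symm] <;> norm_num
  have hsumg1 : ∑ i, g i = 56 := by
    have := (L8Aux.sum_eig hL').1
    rw [hgdef]
    rw [Equiv.sum_comp σ hL'.eigenvalues]
    exact this
  have hsumg2 : ∑ i, (g i) ^ 2 = 448 := by
    have := (L8Aux.sum_eig hL').2
    rw [hgdef]
    rw [Equiv.sum_comp σ (fun j => hL'.eigenvalues j ^ 2)]
    exact this
  have E0 : (8:ℝ) = na + nb + nc + nd + ne' := by
    have : ∑ _i : Fin 8, (1:ℝ) = 8 := by simp
    calc (8:ℝ) = ∑ _i : Fin 8, (1:ℝ) := by simp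
    _ = _ := by
      rw [Finset.sum_congr rfl fun i _ => hpt0 i]
      simp only [Finset.sum_add_distrib, Finset.sum_boole]
      congr
  have E1 : (56:ℝ) = (7 + s) * na + 10 * nb + 8 * nc + 4 * nd + (7 - s) * ne' := by
    calc (56:ℝ) = ∑ i, g i := hsumg1.symm
    _ = _ := by
      rw [Finset.sum_congr rfl fun i _ => hpt1 i]
      simp only [Finset.sum_add_distrib, ← Finset.mul_sum, Finset.sum_boole]
      congr
  have E2 : (448:ℝ) = (7 + s) ^ 2 * na + 100 * nb + 64 * nc + 16 * nd + (7 - s) ^ 2 * ne' := by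
    calc (448:ℝ) = ∑ i, (g i) ^ 2 := hsumg2.symm
    _ = _ := by
      rw [Finset.sum_congr rfl fun i _ => hpt2 i]
      simp only [Finset.sum_add_distrib, ← Finset.mul_sum, Finset.sum_boole]
      congr
  -- irrationality forces na = ne'
  have hnane : na = ne' := by
    by_contra hne
    have hz : ((na:ℝ) - ne') ≠ 0 := sub_ne_zero.mpr (by exact_mod_cast hne)
    have h1 : ((na:ℝ) - ne') * s = 56 - 7 * na - 10 * nb - 8 * nc - 4 * nd - 7 * ne' := by
      linear_combination -E1
    have hseq : s = ((56:ℝ) - 7 * na - 10 * nb - 8 * nc - 4 * nd - 7 * ne') / ((na:ℝ) - ne') := by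
      rw [eq_div_iff hz, mul_comm] at *
      linarith [h1]
    have : ((((56 - 7 * (na:ℚ) - 10 * nb - 8 * nc - 4 * nd - 7 * ne') / ((na:ℚ) - ne')) : ℚ) : ℝ)
        = s := by
      rw [hseq]
      push_cast
      ring
    exact hirr ⟨_, this⟩
  have hcast : (ne' : ℝ) = (na : ℝ) := by rw [hnane]
  rw [hcast] at E1 E2
  have E1' : (14:ℝ) * na + 10 * nb + 8 * nc + 4 * nd = 56 := by linear_combination -E1
  have E2' : (124:ℝ) * na + 100 * nb + 64 * nc + 16 * nd = 448 := by
    linear_combination -E2 - 2 * (na:ℝ) * hs2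
  have N0 : 8 = na + nb + nc + nd + ne' := by exact_mod_cast E0
  have N1 : 14 * na + 10 * nb + 8 * nc + 4 * nd = 56 := by exact_mod_cast E1'
  have N2 : 124 * na + 100 * nb + 64 * nc + 16 * nd = 448 := by exact_mod_cast E2'
  have hva : na = 1 := by omega
  have hvb : nb = 1 := by omega
  have hvc : nc = 3 := by omega
  have hvd : nd = 2 := by omega
  -- helper lemmas about cards
  have hex : ∀ x : ℝ, 0 < (Finset.univ.filter fun i => g i = x).card → ∃ i, g i = x := by
    intro x hx
    obtain ⟨i, hi⟩ := Finset.card_pos.mp hx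
    exact ⟨i, (Finset.mem_filter.mp hi).2⟩
  have htwo : ∀ (x : ℝ) (i j : Fin 8), g i = x → g j = x → i ≠ j →
      2 ≤ (Finset.univ.filter fun k => g k = x).card := by
    intro x i j hi hj hij
    exact Finset.one_lt_card.mpr ⟨i, Finset.mem_filter.mpr ⟨Finset.mem_univ _, hi⟩,
      j, Finset.mem_filter.mpr ⟨Finset.mem_univ _, hj⟩, hij⟩
  -- g 0 = 7 + s
  have ha0 : g 0 = 7 + s := by
    obtain ⟨i, hi⟩ := hex (7 + s) (by rw [← hna, hva]; norm_num)
    have h0i : g i ≤ g 0 := hmono (Fin.zero_le i)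
    rcases hroot 0 with h | h | h | h | h
    · exact h
    all_goals (exfalso; rw [hi] at h0i; rw [h] at h0i; nlinarith)
  -- g 1 = 10
  have hb1 : g 1 = 10 := by
    obtain ⟨i, hi⟩ := hex 10 (by rw [← hnb, hvb]; norm_num)
    have hi0 : i ≠ 0 := by
      intro h
      rw [h, ha0] at hi
      exact hab hi
    have h1le : (1 : Fin 8) ≤ i := by
      rw [Fin.le_def]
      have : (i : ℕ) ≠ 0 := fun h => hi0 (Fin.ext h)
      omega
    have h1i : g i ≤ g 1 := hmono h1le
    rcases hroot 1 with h | h | h | h | h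
    · exfalso
      have := htwo (7 + s) 0 1 ha0 h (by decide)
      rw [← hna, hva] at this
      omega
    · exact h
    all_goals (exfalso; rw [hi] at h1i; rw [h] at h1i; nlinarith)
  -- g 2 = 8
  have hc2 : g 2 = 8 := by
    obtain ⟨i, hi, hi0, hi1⟩ : ∃ i, g i = 8 ∧ i ≠ 0 ∧ i ≠ 1 := by
      by_contra hcon
      push_neg at hcon
      have hsub : (Finset.univ.filter fun k => g k = 8) ⊆ ({0, 1} : Finset (Fin 8)) := by
        intro k hk
        have hk8 := (Finset.mem_filter.mp hk).2
        by_cases h0 : k = 0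
        · simp [h0]
        · simp [hcon k hk8 h0]
      have := Finset.card_le_card hsub
      rw [← hnc, hvc] at this
      have h2 : ({0, 1} : Finset (Fin 8)).card = 2 := by decide
      omega
    have h2le : (2 : Fin 8) ≤ i := by
      rw [Fin.le_def]
      have h0 : (i : ℕ) ≠ 0 := fun h => hi0 (Fin.ext h)
      have h1 : (i : ℕ) ≠ 1 := fun h => hi1 (Fin.ext h)
      omega
    have h2i : g i ≤ g 2 := hmono h2le
    have h21 : g 2 ≤ g 1 := hmono (by decide)
    rcases hroot 2 with h | h | h | h | h
    · exfalso
      have := htwo (7 + s) 0 2 ha0 h (by decide)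
      rw [← hna, hva] at this
      omega
    · exfalso
      have := htwo 10 1 2 hb1 h (by decide)
      rw [← hnb, hvb] at this
      omega
    · exact h
    all_goals (exfalso; rw [hi] at h2i; rw [h] at h2i; nlinarith)
  -- g 4 = 8
  have hc4 : g 4 = 8 := by
    have h42 : g 4 ≤ g 2 := hmono (by decide)
    rcases hroot 4 with h | h | h | h | h
    · exfalso; rw [h, hc2] at h42; nlinarith
    · exfalso; rw [h, hc2] at h42; nlinarith
    · exact h
    all_goals {
      exfalso
      have hsub : (Finset.univ.filter fun k => g k = 8) ⊆ ({2, 3} : Finset (Fin 8)) := by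
        intro k hk
        have hk8 := (Finset.mem_filter.mp hk).2
        have hk0 : k ≠ 0 := by intro hh; rw [hh, ha0] at hk8; exact hac hk8
        have hk1 : k ≠ 1 := by intro hh; rw [hh, hb1] at hk8; exact hbc hk8
        have hklt : (k : ℕ) < 4 := by
          by_contra hge
          push_neg at hge
          have h4k : g k ≤ g 4 := hmono (by rw [Fin.le_def]; simpa using hge)
          rw [hk8, h] at h4k
          nlinarith
        have h0 : (k : ℕ) ≠ 0 := fun hh => hk0 (Fin.ext hh)
        have h1 : (k : ℕ) ≠ 1 := fun hh => hk1 (Fin.ext hh)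
        have : (k : ℕ) = 2 ∨ (k : ℕ) = 3 := by omega
        rcases this with hh | hh
        · exact Finset.mem_insert.mpr (Or.inl (Fin.ext (by simpa using hh)))
        · exact Finset.mem_insert.mpr (Or.inr (Finset.mem_singleton.mpr (Fin.ext (by simpa using hh))))
      have := Finset.card_le_card hsub
      rw [← hnc, hvc] at this
      have h2 : ({2, 3} : Finset (Fin 8)).card = 2 := by decide
      omega
    }
  -- g 3 = 8
  have hc3 : g 3 = 8 := by
    have h32 : g 3 ≤ g 2 := hmono (by decide)
    have h43 : g 4 ≤ g 3 := hmono (by decide)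
    rw [hc2] at h32
    rw [hc4] at h43
    linarith
  -- conclude
  have hfilter : (Finset.univ.filter fun i : Fin 8 => (i : ℕ) < 5)
      = ({0, 1, 2, 3, 4} : Finset (Fin 8)) := by decide
  rw [hfilter]
  have : ∑ i ∈ ({0, 1, 2, 3, 4} : Finset (Fin 8)), g i = g 0 + g 1 + g 2 + g 3 + g 4 := by
    simp [Finset.sum_insert, Finset.mem_insert]
    ring
  rw [show (∑ i ∈ ({0, 1, 2, 3, 4} : Finset (Fin 8)), hL'.eigenvalues (σ i)) =
    ∑ i ∈ ({0, 1, 2, 3, 4} : Finset (Fin 8)), g i from rfl, this, ha0, hb1, hc2, hc3, hc4]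
  ring
end
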